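/- arXiv:1611.03854 — 6 statements merged into one kernel-verified Lean document; each statement's English description precedes it below -/
import Mathlib

section
/- Let D and H be independent nonnegative real random variables where D has probability density function r ↦ 2πλ r exp(−πλ r²) on (0, ∞) (with λ > 0) and H is exponentially distributed with mean Ω > 0 (density h ↦ Ω⁻¹ exp(−h/Ω) on (0, ∞)). Fix p₀ > 0, ψ > 0, β > 0, I_SI > 0, P_max > 0, and define the transmit power p* = min(p₀·D^{ψβ}, I_SI/H, P_max). Then for every p with 0 < p < P_max, the cumulative distribution function satisfies ℙ(p* ≤ p) = 1 − exp(−πλ (p/p₀)^{2/(ψβ)})·(1 − exp(−I_SI/(p Ω))). -/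
open MeasureTheory Real

private lemma rayleigh_deriv (lam : ℝ) (x : ℝ) :
    HasDerivAt (fun r => -Real.exp (-(π * lam * r ^ 2)))
      (2 * π * lam * x * Real.exp (-(π * lam * x ^ 2))) x := by
  have h1 : HasDerivAt (fun r : ℝ => -(π * lam * r ^ 2)) (-(π * lam * (2 * x))) x := by
    have := ((hasDerivAt_pow 2 x).const_mul (π * lam)).fun_neg
    simpa using this
  have := (h1.exp).fun_neg
  exact this.congr_deriv (by ring)

private lemma rayleigh_tendsto (lam : ℝ) (hlam : 0 < lam) :
    Filter.Tendsto (fun r : ℝ => -Real.exp (-(π * lam * r ^ 2))) Filter.atTop (nhds 0) := by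
  have h1 : Filter.Tendsto (fun r : ℝ => π * lam * r ^ 2) Filter.atTop Filter.atTop := by
    apply Filter.Tendsto.const_mul_atTop (by positivity : (0:ℝ) < π * lam)
    exact Filter.tendsto_pow_atTop two_ne_zero
  have h2 := Real.tendsto_exp_atBot.comp (Filter.tendsto_neg_atTop_atBot.comp h1)
  have h3 : Filter.Tendsto (fun r : ℝ => Real.exp (-(π * lam * r ^ 2)))
      Filter.atTop (nhds 0) := h2
  simpa using h3.neg

private lemma rayleigh_nonneg (lam a : ℝ) (hlam : 0 < lam) (ha : 0 ≤ a) :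
    ∀ x ∈ Set.Ioi a, 0 ≤ 2 * π * lam * x * Real.exp (-(π * lam * x ^ 2)) := by
  intro x hx
  have hx0 : 0 ≤ x := le_trans ha (le_of_lt hx)
  positivity

private lemma rayleigh_integrableOn (lam a : ℝ) (hlam : 0 < lam) (ha : 0 ≤ a) :
    MeasureTheory.IntegrableOn
      (fun r => 2 * π * lam * r * Real.exp (-(π * lam * r ^ 2))) (Set.Ioi a) :=
  integrableOn_Ioi_deriv_of_nonneg' (fun x _ => rayleigh_deriv lam x)
    (rayleigh_nonneg lam a hlam ha) (rayleigh_tendsto lam hlam)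

private lemma rayleigh_tail (lam a : ℝ) (hlam : 0 < lam) (ha : 0 ≤ a) :
    ∫ r in Set.Ioi a, 2 * π * lam * r * Real.exp (-(π * lam * r ^ 2)) =
      Real.exp (-(π * lam * a ^ 2)) := by
  have := integral_Ioi_of_hasDerivAt_of_nonneg' (fun x _ => rayleigh_deriv lam x)
    (rayleigh_nonneg lam a hlam ha) (rayleigh_tendsto lam hlam)
  simpa using this

private lemma exp_antideriv (Om : ℝ) (hOm : 0 < Om) (x : ℝ) :
    HasDerivAt (fun h => -Real.exp (-(h / Om))) (Om⁻¹ * Real.exp (-(x / Om))) x := by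
  have h1 : HasDerivAt (fun h : ℝ => -(h / Om)) (-(1 / Om)) x :=
    ((hasDerivAt_id x).div_const Om).neg
  have := (h1.exp).fun_neg
  exact this.congr_deriv (by ring)

/-- C.d.f. of the transmit power under SIA fractional power control with a
Rayleigh self-interference channel (Lemma 1 / Corollary 1, case K = 0). -/
theorem sia_power_control_cdf
    {Ω : Type*} [MeasurableSpace Ω] (P : Measure Ω) [IsProbabilityMeasure P]
    (D H : Ω → ℝ) (hDm : Measurable D) (hHm : Measurable H)
    (lam Om p₀ ψ β ISI Pmax : ℝ)
    (hlam : 0 < lam) (hOm : 0 < Om) (hp₀ : 0 < p₀) (hψ : 0 < ψ) (hβ : 0 < β)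
    (hISI : 0 < ISI) (hPmax : 0 < Pmax)
    (hindep : ProbabilityTheory.IndepFun D H P)
    (hD : Measure.map D P =
      (volume : Measure ℝ).withDensity
        (fun r => ENNReal.ofReal
          (if 0 < r then 2 * π * lam * r * Real.exp (-(π * lam * r ^ 2)) else 0)))
    (hH : Measure.map H P =
      (volume : Measure ℝ).withDensity
        (fun h => ENNReal.ofReal
          (if 0 < h then Om⁻¹ * Real.exp (-(h / Om)) else 0))) :
    ∀ p : ℝ, 0 < p → p < Pmax →
      P {ω | min (min (p₀ * D ω ^ (ψ * β)) (ISI / H ω)) Pmax ≤ p} =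
        ENNReal.ofReal
          (1 - Real.exp (-(π * lam * (p / p₀) ^ (2 / (ψ * β)))) *
            (1 - Real.exp (-(ISI / (p * Om))))) := by
  intro p hp hpP
  have hψβ : 0 < ψ * β := mul_pos hψ hβ
  set c : ℝ := ISI / p with hc
  have hcpos : 0 < c := div_pos hISI hp
  have hppos : 0 < p / p₀ := div_pos hp hp₀
  set a : ℝ := (p / p₀) ^ (ψ * β)⁻¹ with ha
  have hapos : 0 < a := Real.rpow_pos_of_pos hppos _
  set s : Set ℝ := {r | p < p₀ * r ^ (ψ * β)} with hs_def
  set t : Set ℝ := {h | p < ISI / h} with ht_def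
  have hsm : MeasurableSet s := by
    have hmono : Measurable fun r : ℝ => p₀ * r ^ (ψ * β) :=
      (Real.continuous_rpow_const hψβ.le).measurable.const_mul p₀
    exact measurableSet_lt measurable_const hmono
  have htm : MeasurableSet t := by
    have : Measurable fun h : ℝ => ISI / h := measurable_const.div measurable_id
    exact measurableSet_lt measurable_const this
  -- rewrite the event as the complement of the intersection of two preimages
  have hEcompl : {ω | min (min (p₀ * D ω ^ (ψ * β)) (ISI / H ω)) Pmax ≤ p} =
      (D ⁻¹' s ∩ H ⁻¹' t)ᶜ := by
    ext ω
    simp only [Set.mem_setOf_eq, Set.mem_compl_iff, Set.mem_inter_iff, Set.mem_preimage,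
      hs_def, ht_def, min_le_iff, not_and_or, not_lt]
    constructor
    · rintro ((h | h) | h)
      · exact Or.inl h
      · exact Or.inr h
      · exact absurd h hpP.not_ge
    · rintro (h | h)
      · exact Or.inl (Or.inl h)
      · exact Or.inl (Or.inr h)
  -- the D-marginal probability
  have hDs : Measure.map D P s = ENNReal.ofReal (Real.exp (-(π * lam * a ^ 2))) := by
    rw [hD, withDensity_apply _ hsm]
    have hind : (fun r : ℝ => ENNReal.ofReal
        (if 0 < r then 2 * π * lam * r * Real.exp (-(π * lam * r ^ 2)) else 0)) =
        (Set.Ioi (0:ℝ)).indicator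
          (fun r => ENNReal.ofReal (2 * π * lam * r * Real.exp (-(π * lam * r ^ 2)))) := by
      funext r
      by_cases h : 0 < r <;> simp [Set.indicator_apply, h]
    rw [hind, lintegral_indicator measurableSet_Ioi,
      Measure.restrict_restrict measurableSet_Ioi]
    have hset : Set.Ioi (0:ℝ) ∩ s = Set.Ioi a := by
      ext r
      simp only [Set.mem_inter_iff, Set.mem_Ioi, hs_def, Set.mem_setOf_eq]
      constructor
      · rintro ⟨hr, hpr⟩
        have h1 : p / p₀ < r ^ (ψ * β) := (div_lt_iff₀' hp₀).2 hpr
        exact (Real.rpow_inv_lt_iff_of_pos hppos.le hr.le hψβ).2 h1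
      · intro hr
        have hr0 : 0 < r := lt_trans hapos hr
        refine ⟨hr0, ?_⟩
        have h1 := (Real.rpow_inv_lt_iff_of_pos hppos.le hr0.le hψβ).1 hr
        exact (div_lt_iff₀' hp₀).1 h1
    rw [hset]
    have hnn : 0 ≤ᵐ[volume.restrict (Set.Ioi a)]
        fun r => 2 * π * lam * r * Real.exp (-(π * lam * r ^ 2)) :=
      (ae_restrict_iff' measurableSet_Ioi).2
        (Filter.Eventually.of_forall (rayleigh_nonneg lam a hlam hapos.le))
    rw [← ofReal_integral_eq_lintegral_ofReal (rayleigh_integrableOn lam a hlam hapos.le) hnn,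
      rayleigh_tail lam a hlam hapos.le]
  -- the H-marginal probability
  have hHt : Measure.map H P t = ENNReal.ofReal (1 - Real.exp (-(c / Om))) := by
    rw [hH, withDensity_apply _ htm]
    have hind : (fun h : ℝ => ENNReal.ofReal
        (if 0 < h then Om⁻¹ * Real.exp (-(h / Om)) else 0)) =
        (Set.Ioi (0:ℝ)).indicator
          (fun h => ENNReal.ofReal (Om⁻¹ * Real.exp (-(h / Om)))) := by
      funext h
      by_cases hh : 0 < h <;> simp [Set.indicator_apply, hh]
    rw [hind, lintegral_indicator measurableSet_Ioi,
      Measure.restrict_restrict measurableSet_Ioi]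
    have hset : Set.Ioi (0:ℝ) ∩ t = Set.Ioo 0 c := by
      ext h
      simp only [Set.mem_inter_iff, Set.mem_Ioi, ht_def, Set.mem_setOf_eq, Set.mem_Ioo]
      constructor
      · rintro ⟨hh, hph⟩
        refine ⟨hh, ?_⟩
        have h1 : p * h < ISI := (lt_div_iff₀ hh).1 hph
        exact (lt_div_iff₀ hp).2 (by linarith [h1, mul_comm p h] : h * p < ISI)
      · rintro ⟨hh, hhc⟩
        refine ⟨hh, ?_⟩
        have h1 : h * p < ISI := (lt_div_iff₀ hp).1 hhc
        exact (lt_div_iff₀ hh).2 (by linarith [mul_comm p h] : p * h < ISI)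
    rw [hset]
    have hcont : Continuous fun h : ℝ => Om⁻¹ * Real.exp (-(h / Om)) := by
      continuity
    have hint : MeasureTheory.IntegrableOn
        (fun h : ℝ => Om⁻¹ * Real.exp (-(h / Om))) (Set.Ioo 0 c) :=
      (hcont.integrableOn_Icc (a := 0) (b := c)).mono_set Set.Ioo_subset_Icc_self
    have hnn : 0 ≤ᵐ[volume.restrict (Set.Ioo 0 c)]
        fun h => Om⁻¹ * Real.exp (-(h / Om)) :=
      Filter.Eventually.of_forall fun h => by positivity
    rw [← ofReal_integral_eq_lintegral_ofReal hint hnn]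
    congr 1
    have hioc : ∫ h in Set.Ioo 0 c, Om⁻¹ * Real.exp (-(h / Om)) =
        ∫ h in (0:ℝ)..c, Om⁻¹ * Real.exp (-(h / Om)) := by
      rw [intervalIntegral.integral_of_le hcpos.le, integral_Ioc_eq_integral_Ioo]
    rw [hioc, intervalIntegral.integral_eq_sub_of_hasDerivAt
      (fun x _ => exp_antideriv Om hOm x) (hcont.intervalIntegrable 0 c)]
    simp
    ring
  -- combine via independence and complement
  rw [hEcompl, measure_compl ((hDm hsm).inter (hHm htm)) (measure_ne_top P _), measure_univ,
    hindep.measure_inter_preimage_eq_mul s t hsm htm,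
    ← Measure.map_apply hDm hsm, ← Measure.map_apply hHm htm, hDs, hHt]
  have ha2 : a ^ 2 = (p / p₀) ^ (2 / (ψ * β)) := by
    rw [ha, ← Real.rpow_natCast ((p / p₀) ^ (ψ * β)⁻¹) 2, ← Real.rpow_mul hppos.le]
    congr 1
    push_cast
    ring
  have hcOm : c / Om = ISI / (p * Om) := by rw [hc, div_div]
  rw [ha2, hcOm, ← ENNReal.ofReal_mul (Real.exp_nonneg _)]
  have hq : 0 ≤ Real.exp (-(π * lam * (p / p₀) ^ (2 / (ψ * β)))) *
      (1 - Real.exp (-(ISI / (p * Om)))) := by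
    apply mul_nonneg (Real.exp_nonneg _)
    have : Real.exp (-(ISI / (p * Om))) ≤ 1 := by
      rw [Real.exp_le_one_iff]
      have : 0 < ISI / (p * Om) := div_pos hISI (mul_pos hp hOm)
      linarith
    linarith
  rw [ENNReal.ofReal_sub _ hq, ENNReal.ofReal_one]
end

section
/- Let β > 2 be real, α > 0, and U > 0 real. Then ∫₀^∞ 2r · (1 − (1 + α r^{−β})^{−U}) dr = α^{2/β} · Γ(1 − 2/β) · Γ(U + 2/β) / Γ(U). -/
open MeasureTheory Real

section Aux
open Set Filter intervalIntegral

lemma real_beta_integral (a b : ℝ) (ha : 0 < a) (hb : 0 < b) :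
    ∫ x in (0:ℝ)..1, x ^ (a-1) * (1-x) ^ (b-1) =
      Real.Gamma a * Real.Gamma b / Real.Gamma (a+b) := by
  have hab : 0 < Real.Gamma (a+b) := Real.Gamma_pos_of_pos (by linarith)
  have hc : Complex.Gamma a * Complex.Gamma b =
      Complex.Gamma (a+b) * Complex.betaIntegral a b :=
    Complex.Gamma_mul_Gamma_eq_betaIntegral (by simpa using ha) (by simpa using hb)
  have hbeta : Complex.betaIntegral a b =
      ((∫ x in (0:ℝ)..1, x ^ (a-1) * (1-x) ^ (b-1) : ℝ) : ℂ) := by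
    rw [Complex.betaIntegral]
    rw [← intervalIntegral.integral_ofReal]
    refine intervalIntegral.integral_congr fun x hx => ?_
    rw [Set.uIcc_of_le (by norm_num : (0:ℝ) ≤ 1)] at hx
    push_cast
    rw [Complex.ofReal_cpow hx.1, Complex.ofReal_cpow (by linarith [hx.2] : (0:ℝ) ≤ 1 - x)]
    push_cast
    ring
  have := hc
  rw [hbeta] at this
  push_cast at this
  have h2 : (Complex.Gamma a * Complex.Gamma b : ℂ) =
      ((Real.Gamma a * Real.Gamma b : ℝ) : ℂ) := by
    rw [Complex.Gamma_ofReal, Complex.Gamma_ofReal]; push_cast; ring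
  have h3 : (Complex.Gamma (a+b) : ℂ) = ((Real.Gamma (a+b) : ℝ) : ℂ) := by
    rw [← Complex.ofReal_add, Complex.Gamma_ofReal]
  rw [h2, h3, ← Complex.ofReal_mul] at this
  have := Complex.ofReal_injective this
  field_simp
  linarith [this]

lemma real_beta_integral' (a b : ℝ) (ha : 0 < a) (hb : 0 < b) :
    ∫ x in Set.Ioo (0:ℝ) 1, x ^ (a-1) * (1-x) ^ (b-1) =
      Real.Gamma a * Real.Gamma b / Real.Gamma (a+b) := by
  rw [← real_beta_integral a b ha hb, intervalIntegral.integral_of_le (by norm_num : (0:ℝ) ≤ 1),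
    MeasureTheory.integral_Ioc_eq_integral_Ioo]

lemma beta_Ioi (a b : ℝ) (ha : 0 < a) (hb : 0 < b) :
    ∫ t in Set.Ioi (0:ℝ), t ^ (a-1) * (1+t) ^ (-(a+b)) =
      Real.Gamma a * Real.Gamma b / Real.Gamma (a+b) := by
  have h1x : ∀ x ∈ Set.Ioo (0:ℝ) 1, (0:ℝ) < 1 - x := fun x hx => by linarith [hx.2]
  set f : ℝ → ℝ := fun x => x / (1 - x) with hf
  have himg : f '' Set.Ioo (0:ℝ) 1 = Set.Ioi (0:ℝ) := by
    ext t
    simp only [Set.mem_image, Set.mem_Ioi, Set.mem_Ioo]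
    constructor
    · rintro ⟨x, ⟨hx0, hx1⟩, rfl⟩
      exact div_pos hx0 (by linarith)
    · intro ht
      refine ⟨t / (1 + t), ⟨div_pos ht (by linarith), ?_⟩, ?_⟩
      · rw [div_lt_one (by linarith)]; linarith
      · simp only [hf]
        have h1 : 1 - t / (1 + t) = 1 / (1 + t) := by field_simp; ring
        rw [h1]
        field_simp
  have hderiv : ∀ x ∈ Set.Ioo (0:ℝ) 1,
      HasDerivWithinAt f ((1 - x)⁻¹ ^ 2) (Set.Ioo (0:ℝ) 1) x := by
    intro x hx
    have h0 : (1 : ℝ) - x ≠ 0 := (h1x x hx).ne'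
    have : HasDerivAt f ((1 * (1 - x) - x * (-1)) / (1 - x) ^ 2) x :=
      (hasDerivAt_id x).div ((hasDerivAt_id x).const_sub 1) h0
    refine this.hasDerivWithinAt.congr_deriv ?_
    rw [inv_pow, inv_eq_one_div]; congr 1; ring
  have hinj : Set.InjOn f (Set.Ioo (0:ℝ) 1) := by
    intro x hx y hy hxy
    have hx' := (h1x x hx).ne'
    have hy' := (h1x y hy).ne'
    simp only [hf] at hxy; field_simp at hxy
    linarith [hxy]
  have := integral_image_eq_integral_abs_deriv_smul measurableSet_Ioo hderiv hinj
    (fun t => t ^ (a-1) * (1+t) ^ (-(a+b)))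
  rw [himg] at this
  rw [this]
  rw [← real_beta_integral' a b ha hb]
  refine setIntegral_congr_fun measurableSet_Ioo fun x hx => ?_
  have h0 : (0:ℝ) < x := hx.1
  have h1 : (0:ℝ) < 1 - x := h1x x hx
  have hfx : (1:ℝ) + x / (1 - x) = (1 - x)⁻¹ := by field_simp; ring
  simp only [smul_eq_mul, hf]
  rw [hfx, abs_of_nonneg (by positivity : (0:ℝ) ≤ (1-x)⁻¹ ^ 2),
    div_rpow h0.le h1.le, Real.inv_rpow h1.le, Real.rpow_neg h1.le (a+b), inv_inv]
  have key : (1-x)⁻¹ ^ 2 * ((1-x) ^ (a-1))⁻¹ * (1-x) ^ (a+b) = (1-x) ^ (b-1) := by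
    rw [inv_pow, ← Real.rpow_natCast (1-x) 2, ← Real.rpow_neg h1.le,
      ← Real.rpow_neg h1.le, ← Real.rpow_add h1, ← Real.rpow_add h1]
    norm_num
    congr 1
    ring
  rw [div_eq_mul_inv, ← key]
  ring

-- key pointwise bounds
lemma one_sub_rpow_bounds {t U : ℝ} (ht : 0 ≤ t) (hU : 0 < U) :
    0 ≤ 1 - (1+t) ^ (-U) ∧ 1 - (1+t) ^ (-U) ≤ U * t := by
  have h1t : (0:ℝ) < 1 + t := by linarith
  constructor
  · have : (1+t) ^ (-U) ≤ 1 :=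
      Real.rpow_le_one_of_one_le_of_nonpos (by linarith) (by linarith)
    linarith
  · have hy : (0:ℝ) < (1+t) ^ (-U) := Real.rpow_pos_of_pos h1t _
    have hlog : Real.log ((1+t) ^ (-U)) = -U * Real.log (1+t) := Real.log_rpow h1t _
    have h1 : Real.log ((1+t) ^ (-U)) ≤ (1+t) ^ (-U) - 1 := Real.log_le_sub_one_of_pos hy
    have h2 : Real.log (1+t) ≤ t := by
      have := Real.log_le_sub_one_of_pos h1t
      linarith
    have hlogpos : 0 ≤ Real.log (1+t) := Real.log_nonneg (by linarith)
    nlinarith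

lemma integrableOn_K {p U : ℝ} (hp : -1 < p) (hp2 : p < U) (hU : 0 < U) :
    IntegrableOn (fun t : ℝ => t ^ p * (1+t) ^ (-(1+U))) (Set.Ioi 0) := by
  have hcont : ContinuousOn (fun t : ℝ => t ^ p * (1+t) ^ (-(1+U))) (Set.Ioi 0) := by
    apply ContinuousOn.mul
    · exact fun x hx => (Real.continuousAt_rpow_const x p (Or.inl (ne_of_gt hx))).continuousWithinAt
    · intro x hx
      have : (0:ℝ) < 1 + x := by have := mem_Ioi.mp hx; linarith
      exact (((continuous_const.add continuous_id).continuousAt).rpow_const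
        (Or.inl this.ne')).continuousWithinAt
  have hmeas : AEStronglyMeasurable (fun t : ℝ => t ^ p * (1+t) ^ (-(1+U)))
      (volume.restrict (Set.Ioi (0:ℝ))) :=
    hcont.aestronglyMeasurable measurableSet_Ioi
  rw [show Set.Ioi (0:ℝ) = Set.Ioc 0 1 ∪ Set.Ioi 1 from
    (Set.Ioc_union_Ioi_eq_Ioi (by norm_num)).symm]
  apply IntegrableOn.union
  · -- on Ioc 0 1, dominate by t ^ p
    have hg : IntegrableOn (fun t : ℝ => t ^ p) (Set.Ioc (0:ℝ) 1) := by
      have := intervalIntegral.intervalIntegrable_rpow' (a := 0) (b := 1) hp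
      rwa [intervalIntegrable_iff_integrableOn_Ioc_of_le (by norm_num)] at this
    refine hg.integrable.mono' (hmeas.mono_set Set.Ioc_subset_Ioi_self) ?_
    rw [ae_restrict_iff' measurableSet_Ioc]
    filter_upwards with t ht
    have ht0 : 0 < t := ht.1
    have h1t : (0:ℝ) < 1 + t := by linarith
    have h2 : (1+t) ^ (-(1+U)) ≤ 1 :=
      Real.rpow_le_one_of_one_le_of_nonpos (by linarith) (by linarith)
    have h3 : 0 ≤ (1+t) ^ (-(1+U)) := (Real.rpow_pos_of_pos h1t _).le
    rw [Real.norm_eq_abs, abs_of_nonneg (by positivity)]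
    nlinarith [Real.rpow_pos_of_pos ht0 p]
  ·
    have hexp : p - (1+U) < -1 := by linarith
    have hg : IntegrableOn (fun t : ℝ => t ^ (p - (1+U))) (Set.Ioi (1:ℝ)) :=
      integrableOn_Ioi_rpow_of_lt hexp one_pos
    refine hg.integrable.mono' (hmeas.mono_set (Set.Ioi_subset_Ioi (by norm_num))) ?_
    rw [ae_restrict_iff' measurableSet_Ioi]
    filter_upwards with t ht
    have ht1 : (1:ℝ) < t := ht
    have ht0 : (0:ℝ) < t := by linarith
    have h2 : (1+t) ^ (-(1+U)) ≤ t ^ (-(1+U)) :=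
      Real.rpow_le_rpow_of_nonpos ht0 (by linarith) (by linarith)
    have h3 : 0 ≤ (1+t) ^ (-(1+U)) := (Real.rpow_pos_of_pos (by linarith) _).le
    rw [Real.norm_eq_abs, abs_of_nonneg (by positivity), Real.rpow_sub ht0,
      div_eq_mul_inv, ← Real.rpow_neg ht0.le]
    exact mul_le_mul_of_nonneg_left h2 (Real.rpow_nonneg ht0.le p)

lemma integrableOn_J {s U : ℝ} (hs0 : 0 < s) (hs1 : s < 1) (hU : 0 < U) :
    IntegrableOn (fun t : ℝ => (1 - (1+t) ^ (-U)) * t ^ (-s-1)) (Set.Ioi 0) := by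
  have hcont : ContinuousOn (fun t : ℝ => (1 - (1+t) ^ (-U)) * t ^ (-s-1)) (Set.Ioi 0) := by
    apply ContinuousOn.mul
    · refine continuousOn_const.sub ?_
      intro x hx
      have : (0:ℝ) < 1 + x := by have := mem_Ioi.mp hx; linarith
      exact (((continuous_const.add continuous_id).continuousAt).rpow_const
        (Or.inl this.ne')).continuousWithinAt
    · exact fun x hx =>
        (Real.continuousAt_rpow_const x _ (Or.inl (ne_of_gt hx))).continuousWithinAt
  have hmeas : AEStronglyMeasurable (fun t : ℝ => (1 - (1+t) ^ (-U)) * t ^ (-s-1))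
      (volume.restrict (Set.Ioi (0:ℝ))) :=
    hcont.aestronglyMeasurable measurableSet_Ioi
  rw [show Set.Ioi (0:ℝ) = Set.Ioc 0 1 ∪ Set.Ioi 1 from
    (Set.Ioc_union_Ioi_eq_Ioi (by norm_num)).symm]
  apply IntegrableOn.union
  · -- dominate by U * t ^ (-s)
    have hg : IntegrableOn (fun t : ℝ => U * t ^ (-s)) (Set.Ioc (0:ℝ) 1) := by
      have := intervalIntegral.intervalIntegrable_rpow' (a := 0) (b := 1)
        (show (-1:ℝ) < -s by linarith)
      rw [intervalIntegrable_iff_integrableOn_Ioc_of_le (by norm_num)] at this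
      exact this.const_mul U
    refine hg.integrable.mono' (hmeas.mono_set Set.Ioc_subset_Ioi_self) ?_
    rw [ae_restrict_iff' measurableSet_Ioc]
    filter_upwards with t ht
    have ht0 : 0 < t := ht.1
    obtain ⟨hb1, hb2⟩ := one_sub_rpow_bounds ht0.le hU
    rw [Real.norm_eq_abs, abs_of_nonneg (mul_nonneg hb1 (Real.rpow_nonneg ht0.le _))]
    have key : t * t ^ (-s-1) = t ^ (-s) := by
      nth_rewrite 1 [← Real.rpow_one t]
      rw [← Real.rpow_add ht0]
      ring_nf
    calc (1 - (1+t) ^ (-U)) * t ^ (-s-1) ≤ (U * t) * t ^ (-s-1) :=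
          mul_le_mul_of_nonneg_right hb2 (Real.rpow_nonneg ht0.le _)
      _ = U * t ^ (-s) := by rw [mul_assoc, key]
  · -- dominate by t ^ (-s-1)
    have hg : IntegrableOn (fun t : ℝ => t ^ (-s-1)) (Set.Ioi (1:ℝ)) :=
      integrableOn_Ioi_rpow_of_lt (by linarith) one_pos
    refine hg.integrable.mono' (hmeas.mono_set (Set.Ioi_subset_Ioi (by norm_num))) ?_
    rw [ae_restrict_iff' measurableSet_Ioi]
    filter_upwards with t ht
    have ht0 : (0:ℝ) < t := lt_trans one_pos ht
    obtain ⟨hb1, _⟩ := one_sub_rpow_bounds ht0.le hU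
    have h2 : (1+t) ^ (-U) ≤ 1 :=
      Real.rpow_le_one_of_one_le_of_nonpos (by linarith) (by linarith)
    rw [Real.norm_eq_abs, abs_of_nonneg (mul_nonneg hb1 (Real.rpow_nonneg ht0.le _))]
    have h3 : 0 ≤ (1+t) ^ (-U) := (Real.rpow_pos_of_pos (by linarith) _).le
    nlinarith [Real.rpow_pos_of_pos ht0 (-s-1)]

lemma J_eq {s U : ℝ} (hs0 : 0 < s) (hs1 : s < 1) (hU : 0 < U) :
    ∫ t in Set.Ioi (0:ℝ), t ^ (-s-1) * (1 - (1+t) ^ (-U)) =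
      Real.Gamma (1-s) * Real.Gamma (U+s) / (s * Real.Gamma U) := by
  set u : ℝ → ℝ := fun t => 1 - (1+t) ^ (-U) with hu_def
  set u' : ℝ → ℝ := fun t => U * (1+t) ^ (-U-1) with hu'_def
  set v : ℝ → ℝ := fun t => -(t ^ (-s)) / s with hv_def
  set v' : ℝ → ℝ := fun t => t ^ (-s-1) with hv'_def
  have hu : ∀ x ∈ Set.Ioi (0:ℝ), HasDerivAt u (u' x) x := by
    intro x hx
    have hx0 : (0:ℝ) < x := hx
    have h1x : (0:ℝ) < 1 + x := by linarith
    have h : HasDerivAt (fun t : ℝ => (1+t) ^ (-U)) (1 * (-U) * (1+x) ^ (-U-1)) x :=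
      HasDerivAt.rpow_const ((hasDerivAt_id x).const_add 1) (Or.inl h1x.ne')
    have := h.const_sub 1
    refine this.congr_deriv ?_
    simp only [hu'_def]; ring
  have hv : ∀ x ∈ Set.Ioi (0:ℝ), HasDerivAt v (v' x) x := by
    intro x hx
    have hx0 : (0:ℝ) < x := hx
    have h : HasDerivAt (fun t : ℝ => t ^ (-s)) (-s * x ^ (-s-1)) x :=
      Real.hasDerivAt_rpow_const (Or.inl hx0.ne')
    have := (h.neg).div_const s
    refine this.congr_deriv ?_
    simp only [hv'_def]; field_simp
  have huv' : IntegrableOn (u * v') (Set.Ioi (0:ℝ)) := by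
    have := integrableOn_J hs0 hs1 hU
    exact this.congr_fun (fun t ht => rfl) measurableSet_Ioi
  have hKint : IntegrableOn (fun t : ℝ => t ^ (-s) * (1+t) ^ (-(1+U))) (Set.Ioi (0:ℝ)) :=
    integrableOn_K (by linarith) (by linarith) hU
  have hu'v : IntegrableOn (u' * v) (Set.Ioi (0:ℝ)) := by
    have : (u' * v) = fun t => (-(U/s)) * (t ^ (-s) * (1+t) ^ (-(1+U))) := by
      funext t
      simp only [Pi.mul_apply, hu'_def, hv_def]
      rw [show -U - 1 = -(1+U) by ring]
      ring
    rw [this]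
    exact hKint.const_mul _
  have h_zero : Filter.Tendsto (u * v) (nhdsWithin 0 (Set.Ioi 0)) (nhds 0) := by
    have hbound : ∀ t ∈ Set.Ioi (0:ℝ),
        -((U/s) * (t * t ^ (-s))) ≤ (u * v) t ∧ (u * v) t ≤ 0 := by
      intro t ht
      have ht0 : (0:ℝ) < t := ht
      obtain ⟨hb1, hb2⟩ := one_sub_rpow_bounds ht0.le hU
      have hts : 0 ≤ t ^ (-s) := Real.rpow_nonneg ht0.le _
      constructor
      · simp only [Pi.mul_apply, hu_def, hv_def]
        rw [show -((U/s) * (t * t ^ (-s))) = (-(U * t * t ^ (-s)))/s by ring,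
          show (1 - (1+t) ^ (-U)) * (-t ^ (-s)/s) = (-((1 - (1+t) ^ (-U)) * t ^ (-s)))/s by ring]
        refine (div_le_div_iff_of_pos_right hs0).mpr ?_
        nlinarith [mul_le_mul_of_nonneg_right hb2 hts]
      · simp only [Pi.mul_apply, hu_def, hv_def]
        apply mul_nonpos_of_nonneg_of_nonpos hb1
        rw [neg_div]
        have : 0 ≤ t ^ (-s) / s := by positivity
        linarith
    have hlim : Filter.Tendsto (fun t : ℝ => -((U/s) * (t * t ^ (-s))))
        (nhdsWithin 0 (Set.Ioi 0)) (nhds 0) := by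
      have h1 : Filter.Tendsto (fun t : ℝ => t ^ (1-s)) (nhdsWithin 0 (Set.Ioi 0)) (nhds 0) := by
        have hc : Filter.Tendsto (fun t : ℝ => t ^ (1-s)) (nhds 0) (nhds ((0:ℝ) ^ (1-s))) :=
          (Real.continuousAt_rpow_const 0 (1-s) (Or.inr (by linarith))).tendsto
        rw [Real.zero_rpow (by linarith : 1 - s ≠ 0)] at hc
        exact hc.mono_left nhdsWithin_le_nhds
      have h2 : Filter.Tendsto (fun t : ℝ => t * t ^ (-s))
          (nhdsWithin 0 (Set.Ioi 0)) (nhds 0) := by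
        apply h1.congr'
        filter_upwards [self_mem_nhdsWithin] with t ht
        have ht0 : (0:ℝ) < t := ht
        nth_rewrite 2 [← Real.rpow_one t]
        rw [← Real.rpow_add ht0]
        ring_nf
      have := (h2.const_mul (U/s)).neg
      simpa using this
    refine tendsto_of_tendsto_of_tendsto_of_le_of_le' hlim tendsto_const_nhds ?_ ?_
    · filter_upwards [self_mem_nhdsWithin] with t ht using (hbound t ht).1
    · filter_upwards [self_mem_nhdsWithin] with t ht using (hbound t ht).2
  have h_infty : Filter.Tendsto (u * v) Filter.atTop (nhds 0) := by
    have hlim : Filter.Tendsto (fun t : ℝ => -(t ^ (-s) / s)) Filter.atTop (nhds 0) := by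
      have := (tendsto_rpow_neg_atTop hs0).div_const s
      simpa using this.neg
    refine tendsto_of_tendsto_of_tendsto_of_le_of_le' hlim tendsto_const_nhds ?_ ?_
    · filter_upwards [Filter.eventually_gt_atTop (0:ℝ)] with t ht0
      obtain ⟨hb1, _⟩ := one_sub_rpow_bounds ht0.le hU
      have h2 : (1+t) ^ (-U) ≤ 1 :=
        Real.rpow_le_one_of_one_le_of_nonpos (by linarith) (by linarith)
      have hts : 0 ≤ t ^ (-s) := Real.rpow_nonneg ht0.le _
      have hy1 : 1 - (1+t) ^ (-U) ≤ 1 := by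
        have := (Real.rpow_pos_of_pos (by linarith : (0:ℝ) < 1+t) (-U)).le
        linarith
      simp only [Pi.mul_apply, hu_def, hv_def]
      rw [show (1 - (1+t) ^ (-U)) * (-t ^ (-s)/s) = (-((1 - (1+t) ^ (-U)) * t ^ (-s)))/s by ring,
        show -(t ^ (-s)/s) = (-t ^ (-s))/s by ring]
      refine (div_le_div_iff_of_pos_right hs0).mpr ?_
      nlinarith [mul_le_mul_of_nonneg_right hy1 hts]
    · filter_upwards [Filter.eventually_gt_atTop (0:ℝ)] with t ht0
      obtain ⟨hb1, _⟩ := one_sub_rpow_bounds ht0.le hU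
      simp only [Pi.mul_apply, hu_def, hv_def]
      apply mul_nonpos_of_nonneg_of_nonpos hb1
      rw [neg_div]
      have hts : 0 ≤ t ^ (-s) := Real.rpow_nonneg ht0.le _
      have : 0 ≤ t ^ (-s) / s := by positivity
      linarith
  have hibp := integral_Ioi_mul_deriv_eq_deriv_mul hu hv huv' hu'v h_zero h_infty
  -- LHS of hibp is ∫ u x * v' x ; our target integrand is v' * u
  have hL : ∫ t in Set.Ioi (0:ℝ), t ^ (-s-1) * (1 - (1+t) ^ (-U))
      = ∫ x in Set.Ioi (0:ℝ), u x * v' x := by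
    refine setIntegral_congr_fun measurableSet_Ioi fun t ht => ?_
    simp only [hu_def, hv'_def]; ring
  have hR : ∫ x in Set.Ioi (0:ℝ), u' x * v x
      = -(U/s) * ∫ t in Set.Ioi (0:ℝ), t ^ (-s) * (1+t) ^ (-(1+U)) := by
    rw [← MeasureTheory.integral_const_mul]
    refine setIntegral_congr_fun measurableSet_Ioi fun t ht => ?_
    simp only [hu'_def, hv_def]
    rw [show -U - 1 = -(1+U) by ring]
    ring
  have hbeta : ∫ t in Set.Ioi (0:ℝ), t ^ (-s) * (1+t) ^ (-(1+U))
      = Real.Gamma (1-s) * Real.Gamma (U+s) / Real.Gamma (1+U) := by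
    have := beta_Ioi (1-s) (U+s) (by linarith) (by linarith)
    rw [show (1-s) - 1 = -s by ring, show (1-s) + (U+s) = 1+U by ring] at this
    exact this
  rw [hL, hibp, hR, hbeta]
  rw [show (1:ℝ) + U = U + 1 by ring, Real.Gamma_add_one hU.ne']
  have hGU : 0 < Real.Gamma U := Real.Gamma_pos_of_pos hU
  field_simp
  ring

end Aux

/-- Exponent computation underlying the Poisson-field interference m.g.f.s
(Lemmas 3 and 5 of the paper) for Γ(U,1)-distributed channel power gains and
path-loss exponent β. -/
theorem poisson_field_exponent
    (β α U : ℝ) (hβ : 2 < β) (hα : 0 < α) (hU : 0 < U) :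
    ∫ r in Set.Ioi (0 : ℝ), 2 * r * (1 - (1 + α * r ^ (-β)) ^ (-U)) =
      α ^ (2 / β) * Real.Gamma (1 - 2 / β) * Real.Gamma (U + 2 / β) /
        Real.Gamma U := by

  have hβ0 : (0:ℝ) < β := by linarith
  have hs0 : (0:ℝ) < 2/β := by positivity
  have hs1 : 2/β < 1 := by rw [div_lt_one hβ0]; linarith
  set c : ℝ := α ^ (1/β) with hc_def
  have hc : 0 < c := Real.rpow_pos_of_pos hα _
  set g : ℝ → ℝ := fun y => 2 * y * (1 - (1 + y ^ (-β)) ^ (-U)) with hg_def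
  -- Step A : scaling r = c * y
  have hcβ : c ^ β = α := by
    rw [hc_def, ← Real.rpow_mul hα.le, one_div_mul_cancel hβ0.ne', Real.rpow_one]
  have stepA : ∫ r in Set.Ioi (0:ℝ), 2 * r * (1 - (1 + α * r ^ (-β)) ^ (-U)) =
      (c * c) * ∫ y in Set.Ioi (0:ℝ), g y := by
    have h1 : ∀ r ∈ Set.Ioi (0:ℝ),
        2 * r * (1 - (1 + α * r ^ (-β)) ^ (-U)) = c * g (c⁻¹ * r) := by
      intro r hr
      have hr0 : (0:ℝ) < r := hr
      have key : (c⁻¹ * r) ^ (-β) = α * r ^ (-β) := by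
        rw [Real.mul_rpow (by positivity) hr0.le, ← Real.rpow_neg_one c,
          ← Real.rpow_mul hc.le]
        rw [show (-1) * (-β) = β by ring, hcβ]
      simp only [hg_def, key]
      field_simp
    rw [setIntegral_congr_fun measurableSet_Ioi h1, MeasureTheory.integral_const_mul,
      MeasureTheory.integral_comp_mul_left_Ioi g 0 (inv_pos.mpr hc)]
    simp only [mul_zero, inv_inv, smul_eq_mul]
    ring
  -- Step B : substitution t = y ^ (-β)
  have stepB : ∫ y in Set.Ioi (0:ℝ), g y =
      (2/β) * ∫ t in Set.Ioi (0:ℝ), t ^ (-(2/β)-1) * (1 - (1+t) ^ (-U)) := by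
    set f : ℝ → ℝ := fun t => (2/β) * (t ^ (-(2/β)-1) * (1 - (1+t) ^ (-U))) with hf_def
    have hcomp := MeasureTheory.integral_comp_rpow_Ioi f (show (-β) ≠ 0 by linarith)
    have h2 : ∀ y ∈ Set.Ioi (0:ℝ), g y = (|(-β)| * y ^ ((-β) - 1)) • f (y ^ (-β)) := by
      intro y hy
      have hy0 : (0:ℝ) < y := hy
      have habs : |(-β)| = β := by rw [abs_neg, abs_of_pos hβ0]
      have hyβ : (0:ℝ) < y ^ (-β) := Real.rpow_pos_of_pos hy0 _
      have key : (y ^ (-β)) ^ (-(2/β)-1) = y ^ (β + 2) := by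
        rw [← Real.rpow_mul hy0.le]
        congr 1
        field_simp
        ring
      simp only [hf_def, hg_def, smul_eq_mul, habs, key]
      have hcomb : y ^ ((-β) - 1) * y ^ (β + 2) = y := by
        rw [← Real.rpow_add hy0, show -β - 1 + (β+2) = 1 by ring, Real.rpow_one]
      rw [show β * y ^ (-β - 1) * (2 / β * (y ^ (β + 2) * (1 - (1 + y ^ (-β)) ^ (-U)))) =
          2 * (y ^ (-β - 1) * y ^ (β + 2)) * (1 - (1 + y ^ (-β)) ^ (-U)) by
        field_simp, hcomb]
    rw [setIntegral_congr_fun measurableSet_Ioi h2, hcomp, hf_def,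
      MeasureTheory.integral_const_mul]
  have hJ := J_eq hs0 hs1 hU
  have hexp : ∀ t : ℝ, t ^ (-(2/β)-1) = t ^ (-(2/β)-1) := fun t => rfl
  rw [stepA, stepB]
  rw [show (∫ t in Set.Ioi (0:ℝ), t ^ (-(2/β)-1) * (1 - (1+t) ^ (-U))) =
      ∫ t in Set.Ioi (0:ℝ), t ^ (-(2/β)-1) * (1 - (1+t) ^ (-U)) from rfl]
  rw [hJ]
  have hcc : c * c = α ^ (2/β) := by
    rw [hc_def, ← Real.rpow_add hα]
    congr 1
    ring
  rw [hcc]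
  have hGU : 0 < Real.Gamma U := Real.Gamma_pos_of_pos hU
  field_simp
end

section
/- The improper integrals A = lim_{T→∞} ∫₁^T (cos t)/t dt and B = lim_{T→∞} ∫₁^T (sin t)/t dt exist, and ∫₀^∞ (R/(1 + R⁴)) · exp(−R²) dR = (1/2) · ( sin(1)·(−A) + cos(1)·B ). In the notation of the cosine and sine integral functions, −A = Ci(1) and B = π/2 − Si(1), so the value equals (1/2)(sin(1)·Ci(1) + cos(1)·(π/2 − Si(1))). -/
open MeasureTheory Real Filter Set intervalIntegral

section AppendixEHelpers

lemma exp_int {c : ℝ} (hc : 0 < c) : ∫ u in Ioi (0:ℝ), Real.exp (-(c*u)) = 1/c := by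
  have hderiv : ∀ x ∈ Ici (0:ℝ), HasDerivAt (fun u => -Real.exp (-(c*u))/c) (Real.exp (-(c*x))) x := by
    intro x _
    have h1 : HasDerivAt (fun u : ℝ => -(c*u)) (-c) x := by
      simpa using ((hasDerivAt_id x).const_mul c).fun_neg
    have := (h1.exp).fun_neg.div_const c
    refine this.congr_deriv ?_
    field_simp
  have hint : IntegrableOn (fun u => Real.exp (-(c*u))) (Ioi (0:ℝ)) := by
    simpa [neg_mul] using exp_neg_integrableOn_Ioi 0 hc
  have htend : Tendsto (fun u => -Real.exp (-(c*u))/c) atTop (nhds 0) := by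
    have h0 : Tendsto (fun u : ℝ => -(c*u)) atTop atBot :=
      tendsto_neg_atTop_atBot.comp ((tendsto_const_mul_atTop_of_pos hc).2 tendsto_id)
    simpa using ((Real.tendsto_exp_atBot.comp h0).neg.div_const c)
  have := integral_Ioi_of_hasDerivAt_of_tendsto' hderiv hint htend
  simp at this
  rw [this]; ring

lemma integrable_I : IntegrableOn (fun u => Real.exp (-u) / (1+u^2)) (Ioi (0:ℝ)) := by
  refine Integrable.mono' (by simpa [neg_mul, IntegrableOn] using exp_neg_integrableOn_Ioi (0:ℝ) one_pos)
    ?_ ?_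
  · refine (Continuous.aestronglyMeasurable ?_).restrict
    exact Real.continuous_exp.comp continuous_neg |>.div
      (by continuity) (fun u => by positivity)
  · filter_upwards with u
    have h1 : (0:ℝ) < 1 + u^2 := by positivity
    rw [Real.norm_eq_abs, abs_of_nonneg (by positivity)]
    calc Real.exp (-u) / (1+u^2) ≤ Real.exp (-u) / 1 :=
          div_le_div_of_nonneg_left (Real.exp_pos _).le one_pos (by nlinarith)
      _ = Real.exp (-u) := by simp

lemma subst_lemma :
    ∫ R in Ioi (0:ℝ), (R / (1 + R ^ 4)) * Real.exp (-R ^ 2)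
      = (1/2) * ∫ u in Ioi (0:ℝ), Real.exp (-u) / (1+u^2) := by
  have himg : (fun x : ℝ => x^2) '' (Ioi 0) = Ioi 0 := by
    ext u
    constructor
    · rintro ⟨x, hx, rfl⟩; exact pow_pos (show (0:ℝ) < x from hx) 2
    · intro hu
      exact ⟨Real.sqrt u, Real.sqrt_pos.2 hu, Real.sq_sqrt (le_of_lt hu)⟩
  have hderiv : ∀ x ∈ Ioi (0:ℝ), HasDerivWithinAt (fun x : ℝ => x^2) (2*x) (Ioi 0) x := by
    intro x _
    simpa [mul_comm] using (hasDerivAt_pow 2 x).hasDerivWithinAt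
  have hinj : InjOn (fun x : ℝ => x^2) (Ioi 0) := by
    intro a ha b hb h
    have ha' : (0:ℝ) ≤ a := le_of_lt ha
    have hb' : (0:ℝ) ≤ b := le_of_lt hb
    simp only at h
    nlinarith [h, sq_nonneg (a-b), sq_nonneg (a+b)]
  have key := integral_image_eq_integral_abs_deriv_smul measurableSet_Ioi hderiv hinj
    (fun u => Real.exp (-u) / (1+u^2))
  rw [himg] at key
  rw [key, ← MeasureTheory.integral_const_mul]
  refine setIntegral_congr_fun measurableSet_Ioi ?_
  intro x hx
  have hx0 : (0:ℝ) < x := hx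
  have h1 : (0:ℝ) < 1 + x^4 := by positivity
  simp only [smul_eq_mul]
  rw [abs_of_nonneg (by positivity : (0:ℝ) ≤ 2*x)]
  have hexp : (0:ℝ) < Real.exp (-x^2) := Real.exp_pos _
  have h4 : (1 + (x^2)^2) = 1 + x^4 := by ring
  rw [h4]
  field_simp

lemma exp_sin_integral (u T : ℝ) :
    ∫ s in (0:ℝ)..T, Real.exp (-(u*s)) * Real.sin s
      = (1 - Real.exp (-(u*T)) * (Real.cos T + u * Real.sin T)) / (1+u^2) := by
  have h1 : (0:ℝ) < 1 + u^2 := by positivity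
  have hderiv : ∀ s ∈ Set.uIcc (0:ℝ) T,
      HasDerivAt (fun s => -(Real.exp (-(u*s)) * (u * Real.sin s + Real.cos s)) / (1+u^2))
        (Real.exp (-(u*s)) * Real.sin s) s := by
    intro s _
    have he : HasDerivAt (fun s : ℝ => Real.exp (-(u*s))) (-u * Real.exp (-(u*s))) s := by
      have h0 : HasDerivAt (fun s : ℝ => -(u*s)) (-u) s := by
        simpa using ((hasDerivAt_id s).const_mul u).fun_neg
      simpa [mul_comm] using h0.exp
    have hg : HasDerivAt (fun s : ℝ => u * Real.sin s + Real.cos s)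
        (u * Real.cos s - Real.sin s) s := by
      simpa [sub_eq_add_neg] using ((Real.hasDerivAt_sin s).const_mul u).fun_add (Real.hasDerivAt_cos s)
    have := ((he.mul hg).fun_neg).div_const (1+u^2)
    refine this.congr_deriv ?_
    field_simp
    ring
  have hcont : IntervalIntegrable (fun s => Real.exp (-(u*s)) * Real.sin s) volume 0 T := by
    apply Continuous.intervalIntegrable
    exact (Real.continuous_exp.comp (by continuity)).mul Real.continuous_sin
  have := integral_eq_sub_of_hasDerivAt hderiv hcont
  rw [this]
  simp [Real.sin_zero, Real.cos_zero]
  field_simp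
  ring

lemma fubini_step {T : ℝ} (hT : 0 ≤ T) :
    ∫ s in (0:ℝ)..T, Real.sin s / (1+s)
      = ∫ u in Ioi (0:ℝ), Real.exp (-u) *
          ((1 - Real.exp (-(u*T)) * (Real.cos T + u * Real.sin T)) / (1+u^2)) := by
  rw [intervalIntegral.integral_of_le hT]
  have step1 : ∀ s ∈ Ioc (0:ℝ) T,
      Real.sin s / (1+s) = ∫ u in Ioi (0:ℝ), Real.sin s * Real.exp (-((1+s)*u)) := by
    intro s hs
    have hs1 : (0:ℝ) < 1 + s := by linarith [hs.1]
    rw [MeasureTheory.integral_const_mul, exp_int hs1]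
    field_simp
  rw [setIntegral_congr_fun measurableSet_Ioc step1]
  have hswap : ∫ s in Ioc (0:ℝ) T, ∫ u in Ioi (0:ℝ), Real.sin s * Real.exp (-((1+s)*u))
      = ∫ u in Ioi (0:ℝ), ∫ s in Ioc (0:ℝ) T, Real.sin s * Real.exp (-((1+s)*u)) := by
    apply MeasureTheory.integral_integral_swap
    have hmeas : AEStronglyMeasurable
        (Function.uncurry fun s u => Real.sin s * Real.exp (-((1+s)*u)))
        ((volume.restrict (Ioc (0:ℝ) T)).prod (volume.restrict (Ioi (0:ℝ)))) := by
      apply Continuous.aestronglyMeasurable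
      exact (Real.continuous_sin.comp continuous_fst).mul
        (Real.continuous_exp.comp (by continuity))
    refine Integrable.mono' (g := fun p : ℝ × ℝ => (1:ℝ) * Real.exp (-p.2)) ?_ hmeas ?_
    · exact Integrable.mul_prod (f := fun _ : ℝ => (1:ℝ)) (g := fun u => Real.exp (-u))
        (integrableOn_const measure_Ioc_lt_top.ne)
        (by simpa [neg_mul, IntegrableOn] using exp_neg_integrableOn_Ioi (0:ℝ) one_pos)
    · rw [Measure.prod_restrict]
      filter_upwards [ae_restrict_mem (measurableSet_Ioc.prod measurableSet_Ioi)] with p hp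
      obtain ⟨hp1, hp2⟩ := hp
      have hs0 : (0:ℝ) < p.1 := hp1.1
      have hu0 : (0:ℝ) < p.2 := hp2
      simp only [Function.uncurry, norm_mul, Real.norm_eq_abs, one_mul]
      calc |Real.sin p.1| * |Real.exp (-((1+p.1)*p.2))|
          ≤ 1 * Real.exp (-((1+p.1)*p.2)) := by
            rw [abs_of_nonneg (Real.exp_pos _).le]
            exact mul_le_mul_of_nonneg_right (Real.abs_sin_le_one _) (Real.exp_pos _).le
        _ ≤ Real.exp (-p.2) := by
            rw [one_mul, Real.exp_le_exp]
            nlinarith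
  rw [hswap]
  refine setIntegral_congr_fun measurableSet_Ioi ?_
  intro u hu
  have key : ∀ s : ℝ, Real.sin s * Real.exp (-((1+s)*u))
      = Real.exp (-u) * (Real.exp (-(u*s)) * Real.sin s) := by
    intro s
    rw [show -((1+s)*u) = -u + -(u*s) by ring, Real.exp_add]
    ring
  simp only [key]
  rw [MeasureTheory.integral_const_mul, ← intervalIntegral.integral_of_le hT,
    exp_sin_integral u T]

lemma exp_c_integrable {c : ℝ} (hc : 0 < c) :
    IntegrableOn (fun u => Real.exp (-(c*u))) (Ioi (0:ℝ)) := by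
  simpa [neg_mul] using exp_neg_integrableOn_Ioi (0:ℝ) hc

lemma integrable_R {T : ℝ} (hT : 0 ≤ T) :
    IntegrableOn (fun u => Real.exp (-((1+T)*u)) * ((Real.cos T + u * Real.sin T)/(1+u^2)))
      (Ioi (0:ℝ)) := by
  have h1T : (0:ℝ) < 1 + T := by linarith
  refine Integrable.mono' (g := fun u => 2 * Real.exp (-((1+T)*u)))
    ((exp_c_integrable h1T).const_mul 2) ?_ ?_
  · refine (Continuous.aestronglyMeasurable ?_).restrict
    exact (Real.continuous_exp.comp (by continuity)).mul
      ((by continuity : Continuous fun u : ℝ => Real.cos T + u * Real.sin T).div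
        (by continuity) (fun u => by positivity))
  · filter_upwards [ae_restrict_mem measurableSet_Ioi] with u hu
    have hu0 : (0:ℝ) < u := hu
    have h2 : (0:ℝ) < 1 + u^2 := by positivity
    rw [norm_mul, Real.norm_eq_abs, Real.norm_eq_abs, abs_of_nonneg (Real.exp_pos _).le,
      mul_comm (2:ℝ)]
    refine mul_le_mul_of_nonneg_left ?_ (Real.exp_pos _).le
    rw [abs_div, abs_of_nonneg h2.le, div_le_iff₀ h2]
    calc |Real.cos T + u * Real.sin T| ≤ |Real.cos T| + |u * Real.sin T| := abs_add_le _ _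
      _ ≤ 1 + u := by
          have := Real.abs_cos_le_one T
          have h3 : |u * Real.sin T| ≤ u := by
            rw [abs_mul, abs_of_nonneg hu0.le]
            nlinarith [Real.abs_sin_le_one T, abs_nonneg (Real.sin T)]
          linarith
      _ ≤ 2 * (1 + u^2) := by nlinarith
lemma tendsto_main :
    Tendsto (fun T : ℝ => ∫ s in (0:ℝ)..T, Real.sin s / (1+s)) atTop
      (nhds (∫ u in Ioi (0:ℝ), Real.exp (-u) / (1+u^2))) := by
  set I := ∫ u in Ioi (0:ℝ), Real.exp (-u) / (1+u^2) with hI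
  set R := fun T : ℝ => ∫ u in Ioi (0:ℝ),
    Real.exp (-((1+T)*u)) * ((Real.cos T + u * Real.sin T)/(1+u^2)) with hR
  have hsplit : ∀ T : ℝ, 0 ≤ T →
      ∫ s in (0:ℝ)..T, Real.sin s / (1+s) = I - R T := by
    intro T hT
    rw [fubini_step hT, hI, hR]
    rw [← MeasureTheory.integral_sub integrable_I (integrable_R hT)]
    refine setIntegral_congr_fun measurableSet_Ioi fun u hu => ?_
    have h2 : (0:ℝ) < 1 + u^2 := by positivity
    have hexp : Real.exp (-((1+T)*u)) = Real.exp (-u) * Real.exp (-(u*T)) := by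
      rw [← Real.exp_add]; ring_nf
    rw [hexp]
    field_simp
  have hRbound : ∀ T : ℝ, 0 ≤ T → ‖R T‖ ≤ 2 * (1/(1+T)) := by
    intro T hT
    have h1T : (0:ℝ) < 1 + T := by linarith
    have hb : ∀ᵐ u ∂(volume.restrict (Ioi (0:ℝ))),
        ‖Real.exp (-((1+T)*u)) * ((Real.cos T + u * Real.sin T)/(1+u^2))‖
          ≤ 2 * Real.exp (-((1+T)*u)) := by
      filter_upwards [ae_restrict_mem measurableSet_Ioi] with u hu
      have hu0 : (0:ℝ) < u := hu
      have h2 : (0:ℝ) < 1 + u^2 := by positivity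
      rw [norm_mul, Real.norm_eq_abs, Real.norm_eq_abs, abs_of_nonneg (Real.exp_pos _).le,
        mul_comm (2:ℝ)]
      refine mul_le_mul_of_nonneg_left ?_ (Real.exp_pos _).le
      rw [abs_div, abs_of_nonneg h2.le, div_le_iff₀ h2]
      calc |Real.cos T + u * Real.sin T| ≤ |Real.cos T| + |u * Real.sin T| := abs_add_le _ _
        _ ≤ 1 + u := by
            have := Real.abs_cos_le_one T
            have h3 : |u * Real.sin T| ≤ u := by
              rw [abs_mul, abs_of_nonneg hu0.le]
              nlinarith [Real.abs_sin_le_one T, abs_nonneg (Real.sin T)]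
            linarith
        _ ≤ 2 * (1 + u^2) := by nlinarith
    have := MeasureTheory.norm_integral_le_of_norm_le
      ((exp_c_integrable h1T).const_mul 2) hb
    calc ‖R T‖ ≤ ∫ u in Ioi (0:ℝ), 2 * Real.exp (-((1+T)*u)) := this
      _ = 2 * (1/(1+T)) := by rw [MeasureTheory.integral_const_mul, exp_int h1T]
  have hR0 : Tendsto R atTop (nhds 0) := by
    refine squeeze_zero_norm' (f := R) (a := fun T => 2 * (1/(1+T)))
      (by filter_upwards [eventually_ge_atTop (0:ℝ)] with T hT using hRbound T hT) ?_
    have h1 : Tendsto (fun T : ℝ => 1 + T) atTop atTop :=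
      tendsto_atTop_add_const_left _ 1 tendsto_id
    have h2 := (tendsto_inv_atTop_zero.comp h1).const_mul (2:ℝ)
    simpa [one_div, Function.comp] using h2
  have : Tendsto (fun T => I - R T) atTop (nhds (I - 0)) :=
    tendsto_const_nhds.sub hR0
  rw [sub_zero] at this
  refine Tendsto.congr' ?_ this
  filter_upwards [eventually_ge_atTop (0:ℝ)] with T hT
  exact (hsplit T hT).symm

lemma cont_int_on {g : ℝ → ℝ} (hg : Continuous g) {T : ℝ} (hT : 1 ≤ T) (n : ℕ) :
    IntervalIntegrable (fun t => g t / t^n) volume 1 T := by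
  apply ContinuousOn.intervalIntegrable
  apply hg.continuousOn.div (continuousOn_pow n)
  intro t ht
  rw [uIcc_of_le hT] at ht
  have : (0:ℝ) < t := lt_of_lt_of_le one_pos ht.1
  positivity

lemma ibp_cos {T : ℝ} (hT : 1 ≤ T) :
    ∫ t in (1:ℝ)..T, Real.cos t / t
      = Real.sin T / T - Real.sin 1 + ∫ t in (1:ℝ)..T, Real.sin t / t^2 := by
  have hderiv : ∀ t ∈ Set.uIcc (1:ℝ) T,
      HasDerivAt (fun t => Real.sin t / t) (Real.cos t / t - Real.sin t / t^2) t := by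
    intro t ht
    rw [uIcc_of_le hT] at ht
    have ht0 : (0:ℝ) < t := lt_of_lt_of_le one_pos ht.1
    have := (Real.hasDerivAt_sin t).div (hasDerivAt_id' t) (ne_of_gt ht0)
    refine this.congr_deriv ?_
    field_simp
  have h1 := cont_int_on Real.continuous_cos hT 1
  have h2 := cont_int_on Real.continuous_sin hT 2
  simp only [pow_one] at h1
  have key := integral_eq_sub_of_hasDerivAt hderiv (h1.sub h2)
  rw [intervalIntegral.integral_sub h1 h2] at key
  have h1' : Real.sin 1 / 1 = Real.sin 1 := by simp
  linarith [key]

lemma ibp_sin {T : ℝ} (hT : 1 ≤ T) :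
    ∫ t in (1:ℝ)..T, Real.sin t / t
      = -(Real.cos T / T) + Real.cos 1 - ∫ t in (1:ℝ)..T, Real.cos t / t^2 := by
  have hderiv : ∀ t ∈ Set.uIcc (1:ℝ) T,
      HasDerivAt (fun t => -(Real.cos t / t)) (Real.sin t / t + Real.cos t / t^2) t := by
    intro t ht
    rw [uIcc_of_le hT] at ht
    have ht0 : (0:ℝ) < t := lt_of_lt_of_le one_pos ht.1
    have := ((Real.hasDerivAt_cos t).div (hasDerivAt_id' t) (ne_of_gt ht0)).fun_neg
    refine this.congr_deriv ?_
    field_simp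
    ring
  have h1 := cont_int_on Real.continuous_sin hT 1
  have h2 := cont_int_on Real.continuous_cos hT 2
  simp only [pow_one] at h1
  have key := integral_eq_sub_of_hasDerivAt hderiv (h1.add h2)
  rw [intervalIntegral.integral_add h1 h2] at key
  have h1' : Real.cos 1 / 1 = Real.cos 1 := by simp
  linarith [key]

lemma tail_integrable {g : ℝ → ℝ} (hg : Continuous g) (hb : ∀ t, |g t| ≤ 1) :
    IntegrableOn (fun t => g t / t^2) (Ioi (1:ℝ)) := by
  refine Integrable.mono' (g := fun t => t ^ (-2:ℝ))
    (integrableOn_Ioi_rpow_of_lt (by norm_num) one_pos) ?_ ?_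
  · refine ContinuousOn.aestronglyMeasurable ?_ measurableSet_Ioi
    refine hg.continuousOn.div (continuousOn_pow 2) fun t ht => ?_
    have : (0:ℝ) < t := lt_trans one_pos ht
    positivity
  · filter_upwards [ae_restrict_mem measurableSet_Ioi] with t ht
    have ht0 : (0:ℝ) < t := lt_trans one_pos ht
    have h2 : t ^ (-2:ℝ) = 1 / t^2 := by
      rw [Real.rpow_neg ht0.le, one_div, ← Real.rpow_natCast t 2]
      norm_num
    rw [Real.norm_eq_abs, abs_div, abs_of_nonneg (by positivity : (0:ℝ) ≤ t^2), h2]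
    gcongr
    exact hb t

lemma sin_div_tendsto_zero : Tendsto (fun T : ℝ => Real.sin T / T) atTop (nhds 0) := by
  refine squeeze_zero_norm' (a := fun T : ℝ => 1 / T) ?_ ?_
  · filter_upwards [eventually_ge_atTop (1:ℝ)] with T hT
    have hT0 : (0:ℝ) < T := lt_of_lt_of_le one_pos hT
    rw [Real.norm_eq_abs, abs_div, abs_of_nonneg hT0.le]
    gcongr
    exact Real.abs_sin_le_one T
  · simpa [one_div] using tendsto_inv_atTop_zero

lemma cos_div_tendsto_zero : Tendsto (fun T : ℝ => Real.cos T / T) atTop (nhds 0) := by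
  refine squeeze_zero_norm' (a := fun T : ℝ => 1 / T) ?_ ?_
  · filter_upwards [eventually_ge_atTop (1:ℝ)] with T hT
    have hT0 : (0:ℝ) < T := lt_of_lt_of_le one_pos hT
    rw [Real.norm_eq_abs, abs_div, abs_of_nonneg hT0.le]
    gcongr
    exact Real.abs_cos_le_one T
  · simpa [one_div] using tendsto_inv_atTop_zero

lemma tendsto_A :
    Tendsto (fun T : ℝ => ∫ t in (1:ℝ)..T, Real.cos t / t) atTop
      (nhds (-Real.sin 1 + ∫ t in Ioi (1:ℝ), Real.sin t / t^2)) := by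
  have hint : IntegrableOn (fun t => Real.sin t / t^2) (Ioi (1:ℝ)) :=
    tail_integrable Real.continuous_sin Real.abs_sin_le_one
  have h1 : Tendsto (fun T : ℝ => Real.sin T / T - Real.sin 1 + ∫ t in (1:ℝ)..T, Real.sin t / t^2)
      atTop (nhds (0 - Real.sin 1 + ∫ t in Ioi (1:ℝ), Real.sin t / t^2)) :=
    (sin_div_tendsto_zero.sub tendsto_const_nhds).add
      (intervalIntegral_tendsto_integral_Ioi 1 hint tendsto_id)
  rw [zero_sub] at h1
  refine Tendsto.congr' ?_ h1
  filter_upwards [eventually_ge_atTop (1:ℝ)] with T hT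
  exact (ibp_cos hT).symm

lemma tendsto_B :
    Tendsto (fun T : ℝ => ∫ t in (1:ℝ)..T, Real.sin t / t) atTop
      (nhds (Real.cos 1 - ∫ t in Ioi (1:ℝ), Real.cos t / t^2)) := by
  have hint : IntegrableOn (fun t => Real.cos t / t^2) (Ioi (1:ℝ)) :=
    tail_integrable Real.continuous_cos Real.abs_cos_le_one
  have h1 : Tendsto (fun T : ℝ => -(Real.cos T / T) + Real.cos 1
        - ∫ t in (1:ℝ)..T, Real.cos t / t^2)
      atTop (nhds (-(0:ℝ) + Real.cos 1 - ∫ t in Ioi (1:ℝ), Real.cos t / t^2)) :=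
    (cos_div_tendsto_zero.neg.add tendsto_const_nhds).sub
      (intervalIntegral_tendsto_integral_Ioi 1 hint tendsto_id)
  rw [neg_zero, zero_add] at h1
  refine Tendsto.congr' ?_ h1
  filter_upwards [eventually_ge_atTop (1:ℝ)] with T hT
  exact (ibp_sin hT).symm

lemma comb_limit {A B : ℝ}
    (hA : Tendsto (fun T : ℝ => ∫ t in (1:ℝ)..T, Real.cos t / t) atTop (nhds A))
    (hB : Tendsto (fun T : ℝ => ∫ t in (1:ℝ)..T, Real.sin t / t) atTop (nhds B)) :
    Tendsto (fun T : ℝ => ∫ t in (1:ℝ)..T, Real.sin (t-1) / t) atTop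
      (nhds (Real.cos 1 * B - Real.sin 1 * A)) := by
  have h1 : Tendsto (fun T : ℝ =>
      Real.cos 1 * ∫ t in (1:ℝ)..T, Real.sin t / t)
        atTop (nhds (Real.cos 1 * B)) := hB.const_mul _
  have h2 : Tendsto (fun T : ℝ =>
      Real.sin 1 * ∫ t in (1:ℝ)..T, Real.cos t / t)
        atTop (nhds (Real.sin 1 * A)) := hA.const_mul _
  refine Tendsto.congr' ?_ (h1.sub h2)
  filter_upwards [eventually_ge_atTop (1:ℝ)] with T hT
  have hs := cont_int_on Real.continuous_sin hT 1
  have hc := cont_int_on Real.continuous_cos hT 1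
  simp only [pow_one] at hs hc
  rw [← intervalIntegral.integral_const_mul, ← intervalIntegral.integral_const_mul,
    ← intervalIntegral.integral_sub (hs.const_mul _) (hc.const_mul _)]
  refine intervalIntegral.integral_congr fun t ht => ?_
  rw [uIcc_of_le hT] at ht
  have ht0 : (0:ℝ) < t := lt_of_lt_of_le one_pos ht.1
  rw [Real.sin_sub]
  field_simp

lemma shift_limit :
    Tendsto (fun T : ℝ => ∫ t in (1:ℝ)..T, Real.sin (t-1) / t) atTop
      (nhds (∫ u in Ioi (0:ℝ), Real.exp (-u) / (1+u^2))) := by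
  have heq : ∀ T : ℝ, ∫ t in (1:ℝ)..T, Real.sin (t-1) / t
      = ∫ s in (0:ℝ)..(T-1), Real.sin s / (1+s) := by
    intro T
    have := intervalIntegral.integral_comp_sub_right
      (a := (1:ℝ)) (b := T) (fun x => Real.sin x / (1+x)) 1
    simp only [sub_self] at this
    rw [← this]
    refine intervalIntegral.integral_congr fun t _ => ?_
    have : 1 + (t - 1) = t := by ring
    rw [this]
  simp only [heq]
  have hcomp : Tendsto (fun T : ℝ => T - 1) atTop atTop :=
    tendsto_atTop_add_const_right atTop (-1) tendsto_id |>.congr fun x => by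
      simp [sub_eq_add_neg, add_comm]
  exact tendsto_main.comp hcomp

end AppendixEHelpers

/-- Key integral identity of the paper's Appendix E:
∫₀^∞ (R/(1+R⁴)) e^{−R²} dR = (1/2)(sin(1) Ci(1) + cos(1)(π/2 − Si(1))),
with Ci(1) = −lim_{T→∞} ∫₁^T cos t / t dt and
π/2 − Si(1) = lim_{T→∞} ∫₁^T sin t / t dt. -/
theorem appendixE_integral :
    ∃ A B : ℝ,
      Tendsto (fun T : ℝ => ∫ t in (1:ℝ)..T, Real.cos t / t) atTop (nhds A) ∧
      Tendsto (fun T : ℝ => ∫ t in (1:ℝ)..T, Real.sin t / t) atTop (nhds B) ∧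
      ∫ R in Set.Ioi (0 : ℝ), (R / (1 + R ^ 4)) * Real.exp (-R ^ 2) =
        (1 / 2) * (Real.sin 1 * (-A) + Real.cos 1 * B) := by
  refine ⟨_, _, tendsto_A, tendsto_B, ?_⟩
  rw [subst_lemma]
  have hval := tendsto_nhds_unique shift_limit (comb_limit tendsto_A tendsto_B)
  rw [hval]
  ring
end

section
/- Let α > 1/4 be real. Then ∫₀^∞ (1 + s) / ((1 + s²)(α s² + s + 1)) ds = (1/(√(4α−1)·(α² − 2α + 2))) · ( π·(α² − (α/2)(√(4α−1) + 3) + √(4α−1)) + (α/2)·√(4α−1)·ln(α) − α·(2α − 3)·arccot(√(4α−1)) ), where arccot(t) = π/2 − arctan(t). -/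
open MeasureTheory Real Filter Topology

set_option maxHeartbeats 1000000 in
/-- Closed-form integral identity of the paper's Appendix F, used to derive the
bounded FD and HD spectral efficiencies of Lemma 6 (arccot t = π/2 − arctan t). -/
theorem appendixF_integral (α : ℝ) (hα : 1 / 4 < α) :
    ∫ s in Set.Ioi (0 : ℝ), (1 + s) / ((1 + s ^ 2) * (α * s ^ 2 + s + 1)) =
      (1 / (Real.sqrt (4 * α - 1) * (α ^ 2 - 2 * α + 2))) *
        (π * (α ^ 2 - (α / 2) * (Real.sqrt (4 * α - 1) + 3) + Real.sqrt (4 * α - 1)) +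
          (α / 2) * Real.sqrt (4 * α - 1) * Real.log α -
          α * (2 * α - 3) * (π / 2 - Real.arctan (Real.sqrt (4 * α - 1)))) := by
  have hq : (0:ℝ) < 4 * α - 1 := by linarith
  set r := Real.sqrt (4 * α - 1) with hrdef
  have hr0 : 0 < r := Real.sqrt_pos.mpr hq
  have hr2 : r ^ 2 = 4 * α - 1 := Real.sq_sqrt hq.le
  have hΔpos : (0:ℝ) < α ^ 2 - 2 * α + 2 := by nlinarith [sq_nonneg (α - 1)]
  have hα0 : (0:ℝ) < α := by linarith
  have hP : ∀ s : ℝ, 0 < α * s ^ 2 + s + 1 := by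
    intro s
    nlinarith [sq_nonneg (2 * α * s + 1), mul_pos hα0 hα0, sq_nonneg s]
  have h1s : ∀ s : ℝ, (0:ℝ) < 1 + s ^ 2 := fun s => by positivity
  -- purely algebraic facts, stated before introducing abbreviations
  have halg : ∀ t : ℝ, (1 + t) / ((1 + t ^ 2) * (α * t ^ 2 + t + 1)) =
      -α / (2 * (α ^ 2 - 2 * α + 2)) * (2 * t / (1 + t ^ 2))
        + α / (2 * (α ^ 2 - 2 * α + 2)) * ((2 * α * t + 1) / (α * t ^ 2 + t + 1))
        + (2 - α) / (α ^ 2 - 2 * α + 2) * (1 / (1 + t ^ 2))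
        + α * (2 * α - 3) / (2 * (α ^ 2 - 2 * α + 2) * (α * t ^ 2 + t + 1)) := by
    intro t
    have a := (h1s t).ne'
    have b := (hP t).ne'
    have c := hΔpos.ne'
    have b' : t * (t * α + 1) + 1 ≠ 0 := by convert b using 1; ring
    have c' : α * (α - 2) + 2 ≠ 0 := by convert c using 1; ring
    field_simp
    ring
  have hfin : -α / (2 * (α ^ 2 - 2 * α + 2)) * (-Real.log α)
        + (2 - α) / (α ^ 2 - 2 * α + 2) * (π / 2)
        + α * (2 * α - 3) / ((α ^ 2 - 2 * α + 2) * r) * (π / 2)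
        - α * (2 * α - 3) / ((α ^ 2 - 2 * α + 2) * r) * (π / 2 - Real.arctan r) =
      (1 / (r * (α ^ 2 - 2 * α + 2))) *
        (π * (α ^ 2 - (α / 2) * (r + 3) + r) + (α / 2) * r * Real.log α -
          α * (2 * α - 3) * (π / 2 - Real.arctan r)) := by
    have a := hr0.ne'
    have c := hΔpos.ne'
    field_simp
    ring
  set Δ : ℝ := α ^ 2 - 2 * α + 2 with hΔdef
  have hΔ : 0 < Δ := hΔpos
  set c1 : ℝ := -α / (2 * Δ) with hc1
  set c2 : ℝ := α / (2 * Δ) with hc2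
  set c3 : ℝ := (2 - α) / Δ with hc3
  set c4 : ℝ := α * (2 * α - 3) / (Δ * r) with hc4
  set F : ℝ → ℝ := fun s =>
    (c1 * Real.log (1 + s ^ 2) + c2 * Real.log (α * s ^ 2 + s + 1))
      + c3 * Real.arctan s + c4 * Real.arctan ((2 * α * s + 1) / r) with hFdef
  have hΔ' : (α:ℝ) ^ 2 - 2 * α + 2 ≠ 0 := by nlinarith [sq_nonneg (α - 1)]
  -- derivative
  have hF : ∀ s : ℝ, HasDerivAt F ((1 + s) / ((1 + s ^ 2) * (α * s ^ 2 + s + 1))) s := by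
    intro s
    have h1 : HasDerivAt (fun s : ℝ => 1 + s ^ 2) (2 * s) s := by
      simpa using (hasDerivAt_pow 2 s).const_add 1
    have h2 : HasDerivAt (fun s : ℝ => α * s ^ 2 + s + 1) (2 * α * s + 1) s := by
      have := (((hasDerivAt_pow 2 s).const_mul α).add (hasDerivAt_id s)).add_const 1
      refine this.congr_deriv (Eq.symm ?_)
      simp; ring
    have hlog1 : HasDerivAt (fun s : ℝ => Real.log (1 + s ^ 2)) (2 * s / (1 + s ^ 2)) s :=
      h1.log (h1s s).ne'
    have hlog2 : HasDerivAt (fun s : ℝ => Real.log (α * s ^ 2 + s + 1))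
        ((2 * α * s + 1) / (α * s ^ 2 + s + 1)) s := h2.log (hP s).ne'
    have hinner : HasDerivAt (fun s : ℝ => (2 * α * s + 1) / r) (2 * α / r) s := by
      have h : HasDerivAt (fun s : ℝ => 2 * α * s + 1) (2 * α) s := by
        simpa using ((hasDerivAt_id s).const_mul (2 * α)).add_const 1
      exact h.div_const r
    have harc2 : HasDerivAt (fun s : ℝ => Real.arctan ((2 * α * s + 1) / r))
        ((1 / (1 + ((2 * α * s + 1) / r) ^ 2)) * (2 * α / r)) s :=
      (Real.hasDerivAt_arctan ((2 * α * s + 1) / r)).comp (h₂ := Real.arctan) s hinner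
    have hkey : 1 + ((2 * α * s + 1) / r) ^ 2 = 4 * α * (α * s ^ 2 + s + 1) / r ^ 2 := by
      rw [div_pow]
      field_simp
      linear_combination hr2
    have h4 : c4 * ((1 / (1 + ((2 * α * s + 1) / r) ^ 2)) * (2 * α / r))
        = α * (2 * α - 3) / (2 * Δ * (α * s ^ 2 + s + 1)) := by
      rw [hkey, hc4, hΔdef]
      rw [one_div, inv_div]
      field_simp [hr0.ne', hΔ', (hP s).ne', hα0.ne']
      ring
    have hsum := (((hlog1.const_mul c1).add (hlog2.const_mul c2)).add
        ((Real.hasDerivAt_arctan s).const_mul c3)).add (harc2.const_mul c4)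
    refine hsum.congr_deriv (Eq.symm ?_)
    rw [h4]
    exact halg s
  have hnonneg : ∀ x ∈ Set.Ioi (0:ℝ), 0 ≤ (1 + x) / ((1 + x ^ 2) * (α * x ^ 2 + x + 1)) := by
    intro x hx
    have hx0 : (0:ℝ) < x := hx
    exact div_nonneg (by linarith) (mul_pos (h1s x) (hP x)).le
  -- limit at infinity
  have hratio : Tendsto (fun s : ℝ => (1 + s ^ 2) / (α * s ^ 2 + s + 1)) atTop (𝓝 (1 / α)) := by
    have hnum : Tendsto (fun s : ℝ => (s ^ 2)⁻¹ + 1) atTop (𝓝 (0 + 1)) :=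
      ((tendsto_pow_atTop two_ne_zero).inv_tendsto_atTop).add tendsto_const_nhds
    have hden : Tendsto (fun s : ℝ => α + s⁻¹ + (s ^ 2)⁻¹) atTop (𝓝 (α + 0 + 0)) :=
      ((tendsto_const_nhds.add tendsto_inv_atTop_zero).add
        (tendsto_pow_atTop two_ne_zero).inv_tendsto_atTop)
    have h := hnum.div hden (by simpa using hα0.ne')
    have heq : ∀ᶠ s : ℝ in atTop,
        ((s ^ 2)⁻¹ + 1) / (α + s⁻¹ + (s ^ 2)⁻¹) = (1 + s ^ 2) / (α * s ^ 2 + s + 1) := by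
      filter_upwards [eventually_gt_atTop (0:ℝ)] with s hs
      rw [div_eq_div_iff (by positivity) (hP s).ne']
      field_simp
    have := h.congr' heq
    simpa using this
  have hT1 : Tendsto (fun s : ℝ => c1 * Real.log (1 + s ^ 2) + c2 * Real.log (α * s ^ 2 + s + 1))
      atTop (𝓝 (c1 * Real.log (1 / α))) := by
    have hlograt : Tendsto (fun s : ℝ => Real.log ((1 + s ^ 2) / (α * s ^ 2 + s + 1)))
        atTop (𝓝 (Real.log (1 / α))) :=
      (Real.continuousAt_log (by positivity)).tendsto.comp hratio
    refine (hlograt.const_mul c1).congr' ?_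
    filter_upwards [eventually_gt_atTop (0:ℝ)] with s hs
    rw [Real.log_div (h1s s).ne' (hP s).ne', hc1, hc2]
    ring
  rw [one_div, Real.log_inv] at hT1
  have hT2 : Tendsto (fun s : ℝ => c3 * Real.arctan s) atTop (𝓝 (c3 * (π / 2))) :=
    (Real.tendsto_arctan_atTop.mono_right nhdsWithin_le_nhds).const_mul c3
  have hT3 : Tendsto (fun s : ℝ => c4 * Real.arctan ((2 * α * s + 1) / r)) atTop
      (𝓝 (c4 * (π / 2))) := by
    have hlin : Tendsto (fun s : ℝ => (2 * α * s + 1) / r) atTop atTop := by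
      apply Tendsto.atTop_div_const hr0
      exact tendsto_atTop_add_const_right _ 1 (tendsto_id.const_mul_atTop (by positivity))
    exact ((Real.tendsto_arctan_atTop.mono_right nhdsWithin_le_nhds).comp hlin).const_mul c4
  have hm : Tendsto F atTop (𝓝 ((c1 * (-Real.log α) + c3 * (π / 2)) + c4 * (π / 2))) :=
    (hT1.add hT2).add hT3
  have hcont : ContinuousWithinAt F (Set.Ici (0:ℝ)) 0 :=
    (hF 0).continuousAt.continuousWithinAt
  have hint := integral_Ioi_of_hasDerivAt_of_nonneg hcont (fun x _ => hF x) hnonneg hm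
  rw [hint]
  have hF0 : F 0 = c4 * (π / 2 - Real.arctan r) := by
    rw [hFdef]
    norm_num
    exact Or.inl (Real.arctan_inv_of_pos hr0)
  rw [hF0]
  exact hfin
end

section
/- Define Ψ(α) = [ (1+α)·( (5−α)·arccot(√α) + √α·ln((1+α)/4) ) − (π/2)·(5 − 4√α + α)·(1 − 2√α − α) ] / [ (√α/(1+α))·(25 − 6α + α²) ] for α > 0, where arccot(t) = π/2 − arctan(t). Define f(x) = Ψ(8/(π(1+√x)) − 1) + Ψ(8/(π(1+1/√x)) − 1). Then for every x with (π/(π−8))² < x < ((π−8)/π)², one has f(x) ≤ f(1) = 2·Ψ(4/π − 1); i.e., the bounded FD-over-HD spectral efficiency gain is maximized at transmit power ratio x* = p^{(d)}/p^{(u)} = 1. -/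
set_option maxHeartbeats 4000000


open Real

/-- The function Ψ of the paper (eq. SE_SC_APPROX_FUNC), with
arccot t = π/2 − arctan t. -/
noncomputable def Psi (α : ℝ) : ℝ :=
  ((1 + α) * ((5 - α) * (π / 2 - Real.arctan (Real.sqrt α)) +
      Real.sqrt α * Real.log ((1 + α) / 4)) -
    (π / 2) * (5 - 4 * Real.sqrt α + α) * (1 - 2 * Real.sqrt α - α)) /
    ((Real.sqrt α / (1 + α)) * (25 - 6 * α + α ^ 2))

/-- Bounded FD-over-HD SE gain objective of Lemma 7 (up to constants). -/
noncomputable def fGain (x : ℝ) : ℝ :=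
  Psi (8 / (π * (1 + Real.sqrt x)) - 1) +
    Psi (8 / (π * (1 + 1 / Real.sqrt x)) - 1)

noncomputable def psi1 (a : ℝ) : ℝ :=
  (125 - 315*a - 254*a^2 + 170*a^3 - 15*a^4 + a^5) / (2*(Real.sqrt a)^3*(a^2-6*a+25)^2)
      * Real.arctan (Real.sqrt a)
  + π * (64*(3-a)) / (a^2-6*a+25)^2
  + (112 + 96*a - 16*a^2) / (2*(a^2-6*a+25)^2) * Real.log ((1+a)/4)
  + (3*a^2 - 2*a - 5) / (2*a*(a^2-6*a+25))

lemma key1 (a : ℝ) (ha : 0 < a) : HasDerivAt Psi (psi1 a) a := by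
  have hs0 : 0 < Real.sqrt a := Real.sqrt_pos.2 ha
  set s := Real.sqrt a with hsdef
  have hs2 : s ^ 2 = a := Real.sq_sqrt ha.le
  have h1a : (0:ℝ) < 1 + a := by linarith
  have hQ : (0:ℝ) < 25 - 6*a + a^2 := by nlinarith
  have hsq : HasDerivAt Real.sqrt (1/(2*s)) a := Real.hasDerivAt_sqrt ha.ne'
  have hat : HasDerivAt (fun x => Real.arctan (Real.sqrt x)) (1/(1+s^2) * (1/(2*s))) a :=
    (Real.hasDerivAt_arctan s).comp a hsq
  have hlog : HasDerivAt (fun x : ℝ => Real.log ((1+x)/4)) ((1/4)/((1+a)/4)) a := by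
    have hinner : HasDerivAt (fun x : ℝ => (1+x)/4) (1/4) a := by
      simpa using ((hasDerivAt_const a (1:ℝ)).add (hasDerivAt_id a)).div_const 4
    exact hinner.log (by positivity)
  have h1 : HasDerivAt (fun x : ℝ => (1 + x)) 1 a := by
    simpa using (hasDerivAt_const a (1:ℝ)).fun_add (hasDerivAt_id a)
  have h2 : HasDerivAt (fun x : ℝ => (5 - x)) (-1) a := by
    simpa using (hasDerivAt_const a (5:ℝ)).fun_sub (hasDerivAt_id a)
  have h3 := (hasDerivAt_const a (π/2)).fun_sub hat
  have h4 := h2.fun_mul h3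
  have h5 := hsq.fun_mul hlog
  have h6 := ((hasDerivAt_const a (5:ℝ)).fun_sub ((hasDerivAt_const a (4:ℝ)).fun_mul hsq)).fun_add (hasDerivAt_id a)
  have h7 := ((hasDerivAt_const a (1:ℝ)).fun_sub ((hasDerivAt_const a (2:ℝ)).fun_mul hsq)).fun_sub (hasDerivAt_id a)
  have hN := (h1.fun_mul (h4.fun_add h5)).fun_sub (((hasDerivAt_const a (π/2)).fun_mul h6).fun_mul h7)
  have hQd : HasDerivAt (fun x : ℝ => 25 - 6*x + x^2) (-6 + 2*a) a := by
    have := ((hasDerivAt_const a (25:ℝ)).fun_sub ((hasDerivAt_const a (6:ℝ)).fun_mul (hasDerivAt_id a))).fun_add (hasDerivAt_pow 2 a)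
    convert! this using 1
    ring
  have hD := (hsq.fun_div h1 h1a.ne').fun_mul hQd
  have hDne : (s / (1 + a)) * (25 - 6*a + a^2) ≠ 0 := by positivity
  have hPsi := hN.fun_div hD hDne
  have hPsieq : Psi = fun x : ℝ =>
      ((1 + x) * ((5 - x) * (π / 2 - Real.arctan (Real.sqrt x)) +
        Real.sqrt x * Real.log ((1 + x) / 4)) -
      (π / 2) * (5 - 4 * Real.sqrt x + x) * (1 - 2 * Real.sqrt x - x)) /
      ((Real.sqrt x / (1 + x)) * (25 - 6 * x + x ^ 2)) := rfl
  rw [hPsieq]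
  convert! hPsi using 1
  simp only [id_eq]
  rw [psi1, ← hsdef, ← hs2]
  have hsne : s ≠ 0 := hs0.ne'
  have h1s : (1:ℝ) + s^2 ≠ 0 := by positivity
  have hQs : s^4 - 6*s^2 + 25 ≠ 0 := by nlinarith [sq_nonneg (s^2-3)]
  have hQs' : (s^2)^2 - 6*s^2 + 25 ≠ 0 := by nlinarith [sq_nonneg (s^2-3)]
  have hQs'' : (25:ℝ) - 6*s^2 + (s^2)^2 ≠ 0 := by nlinarith [sq_nonneg (s^2-3)]
  field_simp
  ring

noncomputable def psi2 (a : ℝ) : ℝ :=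
  ((-9375 + 13125*a - 17175*a^2 + 11013*a^3 + 923*a^4 - 585*a^5 + 27*a^6 - a^7)
      * Real.arctan (Real.sqrt a)
   + 256*π*(Real.sqrt a)*a^2*(11 - 18*a + 3*a^2)
   + 64*(Real.sqrt a)*a^2*(117 - 21*a - 9*a^2 + a^3) * Real.log ((1+a)/4)
   + (Real.sqrt a)*(a^2-6*a+25)*(375 - 560*a + 566*a^2 - 40*a^3 - 5*a^4))
  / (4*(Real.sqrt a)*a^2*(a^2-6*a+25)^3)

lemma polyD (c0 c1 c2 c3 c4 c5 : ℝ) (a : ℝ) :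
    HasDerivAt (fun x : ℝ => c0 + c1*x + c2*x^2 + c3*x^3 + c4*x^4 + c5*x^5)
      (c1 + 2*c2*a + 3*c3*a^2 + 4*c4*a^3 + 5*c5*a^4) a := by
  have h :=
    (((((hasDerivAt_const a c0).fun_add ((hasDerivAt_id a).const_mul c1)).add
      ((hasDerivAt_pow 2 a).const_mul c2)).add
      ((hasDerivAt_pow 3 a).const_mul c3)).add
      ((hasDerivAt_pow 4 a).const_mul c4)).add
      ((hasDerivAt_pow 5 a).const_mul c5)
  convert! h using 1
  push_cast
  ring

lemma key2 (a : ℝ) (ha : 0 < a) : HasDerivAt psi1 (psi2 a) a := by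
  have hs0 : 0 < Real.sqrt a := Real.sqrt_pos.2 ha
  set s := Real.sqrt a with hsdef
  have hs2 : s ^ 2 = a := Real.sq_sqrt ha.le
  have h1a : (0:ℝ) < 1 + a := by linarith
  have hQ : (0:ℝ) < a^2 - 6*a + 25 := by nlinarith
  have hsq : HasDerivAt Real.sqrt (1/(2*s)) a := Real.hasDerivAt_sqrt ha.ne'
  have hat : HasDerivAt (fun x => Real.arctan (Real.sqrt x)) (1/(1+s^2) * (1/(2*s))) a :=
    (Real.hasDerivAt_arctan s).comp a hsq
  have hlog : HasDerivAt (fun x : ℝ => Real.log ((1+x)/4)) ((1/4)/((1+a)/4)) a := by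
    have hinner : HasDerivAt (fun x : ℝ => (1+x)/4) (1/4) a := by
      simpa using ((hasDerivAt_const a (1:ℝ)).add (hasDerivAt_id a)).div_const 4
    exact hinner.log (by positivity)
  have hQd : HasDerivAt (fun x : ℝ => x^2 - 6*x + 25) (2*a - 6) a := by
    have h := polyD 25 (-6) 1 0 0 0 a
    have heq : (fun x : ℝ => x^2 - 6*x + 25) =
        (fun x : ℝ => 25 + (-6)*x + 1*x^2 + 0*x^3 + 0*x^4 + 0*x^5) := by funext x; ring
    rw [heq]
    convert! h using 1
    ring
  have hq2 : HasDerivAt (fun x : ℝ => (x^2-6*x+25)^2) (2*(a^2-6*a+25)*(2*a-6)) a := by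
    have := hQd.fun_pow 2
    convert! this using 1
    push_cast
    ring
  have hC1 : HasDerivAt (fun x : ℝ => 125 - 315*x - 254*x^2 + 170*x^3 - 15*x^4 + x^5)
      (-315 - 508*a + 510*a^2 - 60*a^3 + 5*a^4) a := by
    have h := polyD 125 (-315) (-254) 170 (-15) 1 a
    have heq : (fun x : ℝ => 125 - 315*x - 254*x^2 + 170*x^3 - 15*x^4 + x^5) =
        (fun x : ℝ => 125 + (-315)*x + (-254)*x^2 + 170*x^3 + (-15)*x^4 + 1*x^5) := by
      funext x; ring
    rw [heq]
    convert! h using 1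
    ring
  have hC3 : HasDerivAt (fun x : ℝ => 112 + 96*x - 16*x^2) (96 - 32*a) a := by
    have h := polyD 112 96 (-16) 0 0 0 a
    have heq : (fun x : ℝ => 112 + 96*x - 16*x^2) =
        (fun x : ℝ => 112 + 96*x + (-16)*x^2 + 0*x^3 + 0*x^4 + 0*x^5) := by funext x; ring
    rw [heq]
    convert! h using 1
    ring
  have hC4 : HasDerivAt (fun x : ℝ => 3*x^2 - 2*x - 5) (6*a - 2) a := by
    have h := polyD (-5) (-2) 3 0 0 0 a
    have heq : (fun x : ℝ => 3*x^2 - 2*x - 5) =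
        (fun x : ℝ => (-5) + (-2)*x + 3*x^2 + 0*x^3 + 0*x^4 + 0*x^5) := by funext x; ring
    rw [heq]
    convert! h using 1
    ring
  have hC2 : HasDerivAt (fun x : ℝ => π * (64*(3-x))) (-64*π) a := by
    have h := ((hasDerivAt_const a (3:ℝ)).fun_sub (hasDerivAt_id a)).const_mul 64
    have h2 := h.const_mul π
    convert! h2 using 1
    ring
  have hD1 : HasDerivAt (fun x : ℝ => 2*(Real.sqrt x)^3*(x^2-6*x+25)^2)
      ((2*(3*s^2*(1/(2*s)))) * (a^2-6*a+25)^2 + 2*s^3*(2*(a^2-6*a+25)*(2*a-6))) a := by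
    have hb : HasDerivAt (fun x : ℝ => 2*(Real.sqrt x)^3) (2*(3*s^2*(1/(2*s)))) a := by
      have := (hsq.fun_pow 3).const_mul 2
      convert! this using 1
      try push_cast
      try ring
    exact hb.fun_mul hq2
  have hD3 : HasDerivAt (fun x : ℝ => 2*(x^2-6*x+25)^2) (2*(2*(a^2-6*a+25)*(2*a-6))) a :=
    hq2.const_mul 2
  have hD4 : HasDerivAt (fun x : ℝ => 2*x*(x^2-6*x+25))
      (2 * (a^2-6*a+25) + 2*a*(2*a-6)) a := by
    have h2x : HasDerivAt (fun x : ℝ => 2*x) 2 a := by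
      simpa using (hasDerivAt_id a).const_mul 2
    exact h2x.fun_mul hQd
  have hD1ne : 2*s^3*((a^2-6*a+25)^2) ≠ 0 := by positivity
  have hD3ne : 2*((a^2-6*a+25)^2) ≠ 0 := by positivity
  have hD4ne : 2*a*(a^2-6*a+25) ≠ 0 := by positivity
  have hT1 := (hC1.fun_div hD1 hD1ne).fun_mul hat
  have hT2 := hC2.fun_div hq2 (by positivity)
  have hT3 := (hC3.fun_div hD3 hD3ne).fun_mul hlog
  have hT4 := hC4.fun_div hD4 hD4ne
  have hsum := ((hT1.fun_add hT2).fun_add hT3).fun_add hT4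
  have hpsi1 : psi1 = fun x : ℝ =>
      (125 - 315*x - 254*x^2 + 170*x^3 - 15*x^4 + x^5) / (2*(Real.sqrt x)^3*(x^2-6*x+25)^2)
        * Real.arctan (Real.sqrt x)
      + π * (64*(3-x)) / (x^2-6*x+25)^2
      + (112 + 96*x - 16*x^2) / (2*(x^2-6*x+25)^2) * Real.log ((1+x)/4)
      + (3*x^2 - 2*x - 5) / (2*x*(x^2-6*x+25)) := by
    funext x; rw [psi1]
  rw [hpsi1]
  convert! hsum using 1
  rw [psi2, ← hsdef, ← hs2]
  have hsne : s ≠ 0 := hs0.ne'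
  have h1s : (1:ℝ) + s^2 ≠ 0 := by positivity
  have hQs : (s^2)^2 - 6*s^2 + 25 ≠ 0 := by nlinarith [sq_nonneg (s^2-3)]
  field_simp
  ring



lemma arctan_lb (s : ℝ) (hs : 0 ≤ s) : s - s^3/3 ≤ Real.arctan s := by
  have hmono : Monotone (fun t : ℝ => Real.arctan t - (t - t^3/3)) := by
    apply monotone_of_deriv_nonneg
    · exact Real.differentiable_arctan.sub
        (differentiable_id.fun_sub ((differentiable_pow 3).div_const 3))
    · intro t
      have hd : HasDerivAt (fun t : ℝ => Real.arctan t - (t - t^3/3))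
          (1/(1+t^2) - (1 - (3*t^2)/3)) t := by
        have h1 := Real.hasDerivAt_arctan t
        have h2 : HasDerivAt (fun t : ℝ => t - t^3/3) (1 - (3*t^2)/3) t := by
          have := (hasDerivAt_id t).fun_sub ((hasDerivAt_pow 3 t).div_const 3)
          convert! this using 1
          try push_cast
          try ring
        exact h1.fun_sub h2
      rw [hd.deriv]
      have h0 : (0:ℝ) < 1 + t^2 := by positivity
      have : 1/(1+t^2) - (1 - (3*t^2)/3) = t^4/(1+t^2) := by field_simp; ring
      rw [this]
      positivity
  have h0 := hmono hs
  simp only [Real.arctan_zero] at h0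
  simpa using h0

lemma psi2_neg (a : ℝ) (h0 : 0 < a) (h1 : a < 0.55) :
  ((-9375 + 13125*a - 17175*a^2 + 11013*a^3 + 923*a^4 - 585*a^5 + 27*a^6 - a^7)
      * Real.arctan (Real.sqrt a)
   + 256*π*(Real.sqrt a)*a^2*(11 - 18*a + 3*a^2)
   + 64*(Real.sqrt a)*a^2*(117 - 21*a - 9*a^2 + a^3) * Real.log ((1+a)/4)
   + (Real.sqrt a)*(a^2-6*a+25)*(375 - 560*a + 566*a^2 - 40*a^3 - 5*a^4))
  / (4*(Real.sqrt a)*a^2*(a^2-6*a+25)^3) < 0 := by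
  have hs0 : 0 < Real.sqrt a := Real.sqrt_pos.2 h0
  set s := Real.sqrt a with hsdef
  have hs2 : s ^ 2 = a := Real.sq_sqrt h0.le
  have hsu : s^2 < 0.55 := by rw [hs2]; exact h1
  have hQ : (0:ℝ) < a^2 - 6*a + 25 := by nlinarith
  apply div_neg_of_neg_of_pos _ (by positivity)
  -- bounds
  have hPa : (-9375 + 13125*a - 17175*a^2 + 11013*a^3 + 923*a^4 - 585*a^5 + 27*a^6 - a^7) ≤ 0 := by
    nlinarith [sq_nonneg a, sq_nonneg (a*a), pow_pos h0 3, pow_pos h0 5, pow_pos h0 7,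
      mul_pos h0 h0]
  have hat := arctan_lb s hs0.le
  have t1 : (-9375 + 13125*a - 17175*a^2 + 11013*a^3 + 923*a^4 - 585*a^5 + 27*a^6 - a^7)
      * Real.arctan s ≤
      (-9375 + 13125*a - 17175*a^2 + 11013*a^3 + 923*a^4 - 585*a^5 + 27*a^6 - a^7)
      * (s - s^3/3) := mul_le_mul_of_nonpos_left hat hPa
  have hpi : π < 3.141593 := Real.pi_lt_d6
  have h11 : (0:ℝ) < 11 - 18*a + 3*a^2 := by nlinarith [sq_nonneg a]
  have hc2 : (0:ℝ) < 256*s*a^2*(11 - 18*a + 3*a^2) := by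
    have := mul_pos (mul_pos (mul_pos (show (0:ℝ) < 256 by norm_num) hs0) (pow_pos h0 2)) h11
    nlinarith [this]
  have t2 : 256*π*s*a^2*(11 - 18*a + 3*a^2) < 256*3.141593*s*a^2*(11 - 18*a + 3*a^2) := by
    have := mul_lt_mul_of_pos_right hpi hc2
    nlinarith [this]
  have hL : Real.log ((1+a)/4) ≤ a - 1.3862943606 := by
    have hlog1 : Real.log (1+a) ≤ a := by
      have := Real.log_le_sub_one_of_pos (show (0:ℝ) < 1+a by linarith)
      linarith
    have hlog4 : (1.3862943606:ℝ) < Real.log 4 := by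
      have h2 : (0.6931471803:ℝ) < Real.log 2 := Real.log_two_gt_d9
      have : Real.log 4 = 2 * Real.log 2 := by
        rw [show (4:ℝ) = 2^2 by norm_num, Real.log_pow]; push_cast; ring
      nlinarith
    have : Real.log ((1+a)/4) = Real.log (1+a) - Real.log 4 := by
      rw [Real.log_div (by linarith) (by norm_num)]
    linarith
  have h117 : (0:ℝ) < 117 - 21*a - 9*a^2 + a^3 := by nlinarith [sq_nonneg a, pow_pos h0 3]
  have hc3 : (0:ℝ) ≤ 64*s*a^2*(117 - 21*a - 9*a^2 + a^3) := by
    have := mul_pos (mul_pos (mul_pos (show (0:ℝ) < 64 by norm_num) hs0) (pow_pos h0 2)) h117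
    nlinarith [this]
  have t3 : 64*s*a^2*(117 - 21*a - 9*a^2 + a^3) * Real.log ((1+a)/4) ≤
      64*s*a^2*(117 - 21*a - 9*a^2 + a^3) * (a - 1.3862943606) :=
    mul_le_mul_of_nonneg_left hL hc3
  -- final polynomial bound
  have hfin : (-9375 + 13125*a - 17175*a^2 + 11013*a^3 + 923*a^4 - 585*a^5 + 27*a^6 - a^7)
      * (s - s^3/3)
      + 256*3.141593*s*a^2*(11 - 18*a + 3*a^2)
      + 64*s*a^2*(117 - 21*a - 9*a^2 + a^3) * (a - 1.3862943606)
      + s*(a^2-6*a+25)*(375 - 560*a + 566*a^2 - 40*a^3 - 5*a^4) < 0 := by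
    rw [← hs2]
    have h5 : (0:ℝ) < s^5 := by positivity
    have hg : (-406159865951/78125000 : ℝ) + 520056177863/78125000*(s^2)
        - 15605548773/78125000*(s^2)^2 - 367356915409/234375000*(s^2)^3
        + 281*(s^2)^4 - 10*(s^2)^5 + 1/3*(s^2)^6 < 0 := by
      nlinarith [sq_nonneg s, hsu, pow_pos hs0 2, sq_nonneg (s^2), sq_nonneg (s^3),
        pow_pos hs0 4, pow_pos hs0 6, pow_pos hs0 8, pow_pos hs0 10, pow_pos hs0 12,
        mul_pos (pow_pos hs0 2) (pow_pos hs0 2)]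
    have heq : (-9375 + 13125*(s^2) - 17175*(s^2)^2 + 11013*(s^2)^3 + 923*(s^2)^4
        - 585*(s^2)^5 + 27*(s^2)^6 - (s^2)^7) * (s - s^3/3)
        + 256*3.141593*s*(s^2)^2*(11 - 18*(s^2) + 3*(s^2)^2)
        + 64*s*(s^2)^2*(117 - 21*(s^2) - 9*(s^2)^2 + (s^2)^3) * ((s^2) - 1.3862943606)
        + s*((s^2)^2-6*(s^2)+25)*(375 - 560*(s^2) + 566*(s^2)^2 - 40*(s^2)^3 - 5*(s^2)^4)
        = s^5 * ((-406159865951/78125000 : ℝ) + 520056177863/78125000*(s^2)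
        - 15605548773/78125000*(s^2)^2 - 367356915409/234375000*(s^2)^3
        + 281*(s^2)^4 - 10*(s^2)^5 + 1/3*(s^2)^6) := by
      norm_num
      ring
    rw [heq]
    exact mul_neg_of_pos_of_neg h5 hg
  nlinarith [t1, t2, t3, hfin]

lemma PsiConc : StrictConcaveOn ℝ (Set.Ioo (0:ℝ) 0.55) Psi := by
  apply strictConcaveOn_of_deriv2_neg (convex_Ioo _ _)
  · intro y hy
    exact (key1 y hy.1).continuousAt.continuousWithinAt
  · intro y hy
    rw [interior_Ioo] at hy
    have hev : deriv Psi =ᶠ[nhds y] psi1 :=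
      Filter.eventually_of_mem (isOpen_Ioo.mem_nhds hy)
        (fun z hz => (key1 z (Set.mem_Ioo.1 hz).1).deriv)
    have : deriv (deriv Psi) y = psi2 y := by
      rw [Filter.EventuallyEq.deriv_eq hev]
      exact (key2 y hy.1).deriv
    show deriv^[2] Psi y < 0
    rw [show deriv^[2] Psi = deriv (deriv Psi) from rfl, this]
    simp only [psi2]
    exact psi2_neg y hy.1 hy.2


/-- Lemma 7 of the paper: the bounded FD over HD SE gain is maximized at
transmit power ratio x* = p^{(d)}/p^{(u)} = 1, with optimum 2Ψ(4/π − 1). -/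
theorem fd_hd_gain_max_at_one (x : ℝ)
    (hx1 : (π / (π - 8)) ^ 2 < x) (hx2 : x < ((π - 8) / π) ^ 2) :
    fGain x ≤ fGain 1 ∧ fGain 1 = 2 * Psi (4 / π - 1) := by
  have hπ0 : (0:ℝ) < π := Real.pi_pos
  have hπl : π < 3.141593 := Real.pi_lt_d6
  have hπg : 3.141592 < π := Real.pi_gt_d6
  have h8π : (0:ℝ) < 8 - π := by linarith
  have hone : fGain 1 = 2 * Psi (4 / π - 1) := by
    rw [fGain, Real.sqrt_one]
    have h1 : 8 / (π * (1 + 1)) - 1 = 4/π - 1 := by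
      rw [show π * (1+1) = 2*π by ring]
      have : (8:ℝ) / (2*π) = 4/π := by
        rw [div_eq_div_iff (by positivity) hπ0.ne']; ring
      rw [this]
    have h2 : 8 / (π * (1 + 1/1)) - 1 = 4/π - 1 := by norm_num at h1 ⊢; exact h1
    rw [h1, h2]; ring
  refine ⟨?_, hone⟩
  -- reduce to concavity
  have hx0 : 0 < x := by
    have h8ne : π - 8 ≠ 0 := by
      intro h
      have : π = 8 := by linarith
      linarith
    have hne : π/(π-8) ≠ 0 := div_ne_zero hπ0.ne' h8ne
    have h1 : (π/(π-8))^2 ≠ 0 := pow_ne_zero 2 hne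
    have h2 : (0:ℝ) ≤ (π/(π-8))^2 := sq_nonneg _
    have h3 : (0:ℝ) < (π/(π-8))^2 := lt_of_le_of_ne h2 (Ne.symm h1)
    linarith
  have ht0 : 0 < Real.sqrt x := Real.sqrt_pos.2 hx0
  set t := Real.sqrt x with htdef
  have ht_ub : t < (8 - π)/π := by
    have h : x < ((8 - π)/π)^2 := by
      have : ((π - 8) / π) ^ 2 = ((8 - π)/π)^2 := by
        rw [div_pow, div_pow]; congr 1; ring
      linarith [hx2, this.symm.le]
    have hc : 0 < (8 - π)/π := by positivity
    calc t = Real.sqrt x := rfl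
      _ < Real.sqrt (((8 - π)/π)^2) := Real.sqrt_lt_sqrt hx0.le h
      _ = (8 - π)/π := Real.sqrt_sq hc.le
  have ht_lb : π/(8 - π) < t := by
    have h : (π/(8 - π))^2 < x := by
      have : (π / (π - 8)) ^ 2 = (π/(8 - π))^2 := by
        rw [div_pow, div_pow]; congr 1; ring
      linarith [hx1, this.le]
    have hc : 0 < π/(8 - π) := by positivity
    calc π/(8 - π) = Real.sqrt ((π/(8 - π))^2) := (Real.sqrt_sq hc.le).symm
      _ < Real.sqrt x := Real.sqrt_lt_sqrt (by positivity) h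
  set A := 8 / (π * (1 + t)) - 1 with hAdef
  set B := 8 / (π * (1 + 1/t)) - 1 with hBdef
  have h1t : (0:ℝ) < 1 + t := by linarith
  have h1t' : (0:ℝ) < 1 + 1/t := by positivity
  have hA_pos : 0 < A := by
    rw [hAdef, sub_pos]
    rw [lt_div_iff₀ (by positivity)]
    have : π * t < 8 - π := by
      calc π * t < π * ((8 - π)/π) := by exact mul_lt_mul_of_pos_left ht_ub hπ0
        _ = 8 - π := by field_simp
    nlinarith
  have hB_pos : 0 < B := by
    rw [hBdef, sub_pos]
    rw [lt_div_iff₀ (by positivity)]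
    have h1 : 1/t < (8 - π)/π := by
      rw [div_lt_div_iff₀ ht0 hπ0]
      have := mul_lt_mul_of_pos_left ht_lb (by linarith : (0:ℝ) < 8 - π)
      calc (1:ℝ) * π = π := by ring
        _ = (8 - π) * (π/(8-π)) := by field_simp
        _ < (8 - π) * t := by exact mul_lt_mul_of_pos_left ht_lb (by linarith)
    have : π * (1/t) < 8 - π := by
      calc π * (1/t) < π * ((8 - π)/π) := mul_lt_mul_of_pos_left h1 hπ0
        _ = 8 - π := by field_simp
    nlinarith
  have hA_ub : A < 8/π - 2 := by
    rw [hAdef]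
    have key : 8 / (π * (1 + t)) < 8/π - 1 := by
      rw [div_lt_iff₀ (by positivity)]
      have h8 : 8/π - 1 = (8 - π)/π := by field_simp
      rw [h8]
      have : (8 - π) * (1 + t) > (8 - π) * (1 + π/(8 - π)) :=
        mul_lt_mul_of_pos_left (by linarith) (by linarith)
      have h2 : (8 - π) * (1 + π/(8 - π)) = 8 := by field_simp; try ring
      calc (8:ℝ) = (8 - π) * (1 + π/(8 - π)) := h2.symm
        _ < (8 - π) * (1 + t) := this
        _ = (8 - π)/π * (π * (1 + t)) := by field_simp; try ring
    linarith
  have hB_ub : B < 8/π - 2 := by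
    rw [hBdef]
    have key : 8 / (π * (1 + 1/t)) < 8/π - 1 := by
      rw [div_lt_iff₀ (by positivity)]
      have h8 : 8/π - 1 = (8 - π)/π := by field_simp
      rw [h8]
      have hinv : π/(8 - π) < 1/t := by
        rw [div_lt_div_iff₀ (by linarith) ht0]
        have hmm : π * ((8 - π)/π) = 8 - π := by field_simp
        nlinarith [mul_lt_mul_of_pos_left ht_ub hπ0, hmm]
      have : (8 - π) * (1 + 1/t) > (8 - π) * (1 + π/(8 - π)) :=
        mul_lt_mul_of_pos_left (by linarith) (by linarith)
      have h2 : (8 - π) * (1 + π/(8 - π)) = 8 := by field_simp; try ring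
      calc (8:ℝ) = (8 - π) * (1 + π/(8 - π)) := h2.symm
        _ < (8 - π) * (1 + 1/t) := this
        _ = (8 - π)/π * (π * (1 + 1/t)) := by field_simp; try ring
    linarith
  have h2c55 : 8/π - 2 < 0.55 := by
    rw [div_sub' hπ0.ne', div_lt_iff₀ hπ0]
    nlinarith
  have hAB : A + B = 2 * (4/π - 1) := by
    rw [hAdef, hBdef]
    have htne : t ≠ 0 := ht0.ne'
    field_simp
    ring
  have hAmem : A ∈ Set.Ioo (0:ℝ) 0.55 := ⟨hA_pos, by linarith⟩
  have hBmem : B ∈ Set.Ioo (0:ℝ) 0.55 := ⟨hB_pos, by linarith⟩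
  have hconc := PsiConc.concaveOn.2 hAmem hBmem
    (by norm_num : (0:ℝ) ≤ 1/2) (by norm_num : (0:ℝ) ≤ 1/2) (by norm_num)
  simp only [smul_eq_mul] at hconc
  have hmid : (1/2) * A + (1/2) * B = 4/π - 1 := by linarith
  rw [hmid] at hconc
  have hfx : fGain x = Psi A + Psi B := by rw [fGain, ← htdef, ← hAdef, ← hBdef]
  rw [hfx, hone]
  linarith
end

section
/- Define Ψ(α) = [ (1+α)·( (5−α)·arccot(√α) + √α·ln((1+α)/4) ) − (π/2)·(5 − 4√α + α)·(1 − 2√α − α) ] / [ (√α/(1+α))·(25 − 6α + α²) ] for α > 0, where arccot(t) = π/2 − arctan(t). Then the exact half-duplex baseline-SISO sum spectral efficiency integral satisfies ∫₀^∞ 4 / ((1 + s²)·(s + arccot(s))) ds ≥ 2·Ψ(8/π − 1); that is, the paper's bounded closed-form expression 2 log₂(e)·Ψ(8/π − 1) (≈ 2.72 nat/s/Hz) bounds the exact HD SE over two time slots, log₂(e)·∫₀^∞ 4/((1+s²)(s+arccot s)) ds (≈ 3 nat/s/Hz), from below. -/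
open MeasureTheory Real

set_option maxHeartbeats 1000000

noncomputable def ff (s : ℝ) : ℝ := 4 / ((1 + s ^ 2) * (s + (π / 2 - Real.arctan s)))

lemma sub_arctan_mono : Monotone (fun x : ℝ => x - Real.arctan x) := by
  apply monotone_of_deriv_nonneg
  · exact differentiable_id.sub Real.differentiable_arctan
  · intro x
    have h : HasDerivAt (fun x : ℝ => x - Real.arctan x) (1 - 1 / (1 + x ^ 2)) x :=
      (hasDerivAt_id x).sub (Real.hasDerivAt_arctan x)
    rw [h.deriv]
    have h1 : (0:ℝ) < 1 + x ^ 2 := by positivity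
    have h2 : 1 / (1 + x ^ 2) ≤ 1 := by rw [div_le_one h1]; nlinarith
    linarith

lemma arctan_sub_le {a b : ℝ} (h : a ≤ b) : Real.arctan b - Real.arctan a ≤ b - a := by
  have := sub_arctan_mono h
  simp only at this
  linarith

lemma arctan_le_self' {x : ℝ} (hx : 0 ≤ x) : Real.arctan x ≤ x := by
  have := arctan_sub_le hx
  simp [Real.arctan_zero] at this
  linarith

lemma arctan_ge_P7 {x : ℝ} (hx : 0 ≤ x) :
    x - x ^ 3 / 3 + x ^ 5 / 5 - x ^ 7 / 7 ≤ Real.arctan x := by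
  have hmono : Monotone (fun x : ℝ => Real.arctan x - (x - x ^ 3 / 3 + x ^ 5 / 5 - x ^ 7 / 7)) := by
    apply monotone_of_deriv_nonneg
    · apply Real.differentiable_arctan.sub
      fun_prop
    · intro x
      have hp : HasDerivAt (fun y : ℝ => y - y ^ 3 / 3 + y ^ 5 / 5 - y ^ 7 / 7)
          (1 - x ^ 2 + x ^ 4 - x ^ 6) x := by
        have h1 := hasDerivAt_id x
        have h3 := (hasDerivAt_pow 3 x).div_const 3
        have h5 := (hasDerivAt_pow 5 x).div_const 5
        have h7 := (hasDerivAt_pow 7 x).div_const 7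
        convert (show HasDerivAt (fun y : ℝ => y - y ^ 3 / 3 + y ^ 5 / 5 - y ^ 7 / 7) _ x from
          ((h1.sub h3).add h5).sub h7) using 1
        push_cast
        ring
      rw [HasDerivAt.deriv (f := fun x => Real.arctan x - (x - x ^ 3 / 3 + x ^ 5 / 5 - x ^ 7 / 7))
        ((Real.hasDerivAt_arctan x).sub hp)]
      have h1 : (0:ℝ) < 1 + x ^ 2 := by positivity
      have h2 : 1 - x ^ 2 + x ^ 4 - x ^ 6 ≤ 1 / (1 + x ^ 2) := by
        rw [le_div_iff₀ h1]; nlinarith [sq_nonneg (x ^ 4)]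
      linarith
  have := hmono hx
  simp [Real.arctan_zero] at this
  linarith

lemma arctan_le_P21 {x : ℝ} (hx : 0 ≤ x) : Real.arctan x ≤
    x - x ^ 3 / 3 + x ^ 5 / 5 - x ^ 7 / 7 + x ^ 9 / 9 - x ^ 11 / 11 + x ^ 13 / 13
      - x ^ 15 / 15 + x ^ 17 / 17 - x ^ 19 / 19 + x ^ 21 / 21 := by
  have hmono : Monotone (fun x : ℝ =>
      (x - x ^ 3 / 3 + x ^ 5 / 5 - x ^ 7 / 7 + x ^ 9 / 9 - x ^ 11 / 11 + x ^ 13 / 13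
        - x ^ 15 / 15 + x ^ 17 / 17 - x ^ 19 / 19 + x ^ 21 / 21) - Real.arctan x) := by
    apply monotone_of_deriv_nonneg
    · apply Differentiable.sub _ Real.differentiable_arctan
      fun_prop
    · intro x
      have hp : HasDerivAt (fun y : ℝ =>
          y - y ^ 3 / 3 + y ^ 5 / 5 - y ^ 7 / 7 + y ^ 9 / 9 - y ^ 11 / 11 + y ^ 13 / 13
            - y ^ 15 / 15 + y ^ 17 / 17 - y ^ 19 / 19 + y ^ 21 / 21)
          (1 - x ^ 2 + x ^ 4 - x ^ 6 + x ^ 8 - x ^ 10 + x ^ 12 - x ^ 14 + x ^ 16 - x ^ 18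
            + x ^ 20) x := by
        have h1 := hasDerivAt_id x
        have h3 := (hasDerivAt_pow 3 x).div_const 3
        have h5 := (hasDerivAt_pow 5 x).div_const 5
        have h7 := (hasDerivAt_pow 7 x).div_const 7
        have h9 := (hasDerivAt_pow 9 x).div_const 9
        have h11 := (hasDerivAt_pow 11 x).div_const 11
        have h13 := (hasDerivAt_pow 13 x).div_const 13
        have h15 := (hasDerivAt_pow 15 x).div_const 15
        have h17 := (hasDerivAt_pow 17 x).div_const 17
        have h19 := (hasDerivAt_pow 19 x).div_const 19
        have h21 := (hasDerivAt_pow 21 x).div_const 21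
        convert (show HasDerivAt (fun y : ℝ =>
            y - y ^ 3 / 3 + y ^ 5 / 5 - y ^ 7 / 7 + y ^ 9 / 9 - y ^ 11 / 11 + y ^ 13 / 13
              - y ^ 15 / 15 + y ^ 17 / 17 - y ^ 19 / 19 + y ^ 21 / 21) _ x from
          ((((((((((h1.sub h3).add h5).sub h7).add h9).sub h11).add h13).sub
          h15).add h17).sub h19).add h21)) using 1
        push_cast
        ring
      rw [HasDerivAt.deriv (f := fun x : ℝ =>
        (x - x ^ 3 / 3 + x ^ 5 / 5 - x ^ 7 / 7 + x ^ 9 / 9 - x ^ 11 / 11 + x ^ 13 / 13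
          - x ^ 15 / 15 + x ^ 17 / 17 - x ^ 19 / 19 + x ^ 21 / 21) - Real.arctan x)
        (hp.sub (Real.hasDerivAt_arctan x))]
      have h1 : (0:ℝ) < 1 + x ^ 2 := by positivity
      have h2 : 1 / (1 + x ^ 2) ≤ 1 - x ^ 2 + x ^ 4 - x ^ 6 + x ^ 8 - x ^ 10 + x ^ 12
          - x ^ 14 + x ^ 16 - x ^ 18 + x ^ 20 := by
        rw [div_le_iff₀ h1]; nlinarith [sq_nonneg (x ^ 11)]
      linarith
  have := hmono hx
  simp [Real.arctan_zero] at this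
  linarith

lemma dpos {x : ℝ} (hx : 0 ≤ x) : 0 < (1 + x ^ 2) * (x + (π / 2 - Real.arctan x)) := by
  have h1 : Real.arctan x ≤ x := arctan_le_self' hx
  have h2 := Real.pi_pos
  have h3 : 0 < x + (π / 2 - Real.arctan x) := by linarith
  have h4 : (0:ℝ) < 1 + x ^ 2 := by positivity
  exact mul_pos h4 h3

lemma ff_nonneg {x : ℝ} (hx : 0 ≤ x) : 0 ≤ ff x :=
  le_of_lt (div_pos four_pos (dpos hx))

lemma ff_anti {a b : ℝ} (ha : 0 ≤ a) (hab : a ≤ b) : ff b ≤ ff a := by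
  unfold ff
  have h2 : Real.arctan b - Real.arctan a ≤ b - a := arctan_sub_le hab
  have hApos : 0 < a + (π / 2 - Real.arctan a) := by
    have := arctan_le_self' ha; have := Real.pi_pos; linarith
  have hmono : (1 + a ^ 2) * (a + (π / 2 - Real.arctan a)) ≤
      (1 + b ^ 2) * (b + (π / 2 - Real.arctan b)) := by
    apply mul_le_mul (by nlinarith) (by linarith) (le_of_lt hApos) (by positivity)
  exact div_le_div_of_nonneg_left (by norm_num) (dpos ha) hmono

lemma ff_contOn {a b : ℝ} (ha : 0 ≤ a) : ContinuousOn ff (Set.Icc a b) := by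
  unfold ff
  apply ContinuousOn.div continuousOn_const
  · exact ((continuous_const.add (continuous_pow 2)).mul
      (continuous_id.add (continuous_const.sub Real.continuous_arctan))).continuousOn
  · intro x hx
    exact (dpos (le_trans ha hx.1)).ne'

lemma piece {a b : ℝ} (ha : 0 ≤ a) (hab : a ≤ b) : (b - a) * ff b ≤ ∫ x in a..b, ff x := by
  have hint : IntervalIntegrable ff volume a b := by
    apply ContinuousOn.intervalIntegrable
    rw [Set.uIcc_of_le hab]
    exact ff_contOn ha
  have h := intervalIntegral.integral_mono_on (μ := volume) (f := fun _ => ff b) (g := ff) hab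
    intervalIntegrable_const hint (fun x hx => ff_anti (le_trans ha hx.1) hx.2)
  rwa [intervalIntegral.integral_const, smul_eq_mul] at h

lemma lbA {x : ℝ} (hx : 0 < x) : 4 * x / (1 + x ^ 2) ^ 2 ≤ ff x := by
  unfold ff
  have h1 : π / 2 - Real.arctan x = Real.arctan x⁻¹ := (Real.arctan_inv_of_pos hx).symm
  have h2 : Real.arctan x⁻¹ ≤ x⁻¹ := arctan_le_self' (by positivity)
  have h3 : Real.arctan x⁻¹ * x ≤ 1 := by
    calc Real.arctan x⁻¹ * x ≤ x⁻¹ * x := mul_le_mul_of_nonneg_right h2 hx.le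
      _ = 1 := inv_mul_cancel₀ hx.ne'
  have hD : (1 + x ^ 2) * (x + (π / 2 - Real.arctan x)) ≤ (1 + x ^ 2) ^ 2 / x := by
    rw [h1, le_div_iff₀ hx]
    nlinarith [h3, sq_nonneg x]
  have heq : 4 * x / (1 + x ^ 2) ^ 2 = 4 / ((1 + x ^ 2) ^ 2 / x) := by
    field_simp
  rw [heq]
  exact div_le_div_of_nonneg_left (by norm_num) (dpos hx.le) hD

lemma lbB {x : ℝ} (hx : 0 ≤ x) :
    4 / ((1 + x ^ 2) * (x + 3141593 / 2000000 - (x - x ^ 3 / 3 + x ^ 5 / 5 - x ^ 7 / 7)))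
      ≤ ff x := by
  unfold ff
  have h1 := arctan_ge_P7 hx
  have hpi : π < 3.141593 := Real.pi_lt_d6
  have hD : (1 + x ^ 2) * (x + (π / 2 - Real.arctan x)) ≤
      (1 + x ^ 2) * (x + 3141593 / 2000000 - (x - x ^ 3 / 3 + x ^ 5 / 5 - x ^ 7 / 7)) := by
    apply mul_le_mul_of_nonneg_left _ (by positivity)
    have : π / 2 < 3141593 / 2000000 := by norm_num at hpi ⊢; linarith
    linarith
  exact div_le_div_of_nonneg_left (by norm_num) (dpos hx) hD

lemma ff_meas : Measurable ff := by
  unfold ff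
  apply Measurable.div measurable_const
  exact ((continuous_const.add (continuous_pow 2)).mul
    (continuous_id.add (continuous_const.sub Real.continuous_arctan))).measurable

lemma ff_intOn : IntegrableOn ff (Set.Ioi 0) := by
  have hb : IntegrableOn (fun x : ℝ => 8 / π * (1 + x ^ 2)⁻¹) (Set.Ioi (0:ℝ)) :=
    (integrable_inv_one_add_sq.const_mul _).integrableOn
  apply hb.mono' ff_meas.aestronglyMeasurable
  rw [ae_restrict_iff' measurableSet_Ioi]
  filter_upwards with x hx
  have hx0 : (0:ℝ) ≤ x := le_of_lt hx
  have h1 : Real.arctan x ≤ x := arctan_le_self' hx0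
  have hpi := Real.pi_pos
  have hD : (1 + x ^ 2) * (π / 2) ≤ (1 + x ^ 2) * (x + (π / 2 - Real.arctan x)) :=
    mul_le_mul_of_nonneg_left (by linarith) (by positivity)
  have h2 : ff x ≤ 4 / ((1 + x ^ 2) * (π / 2)) := by
    unfold ff
    exact div_le_div_of_nonneg_left (by norm_num) (mul_pos (by positivity) (by linarith)) hD
  rw [Real.norm_eq_abs, abs_of_nonneg (ff_nonneg hx0)]
  calc ff x ≤ 4 / ((1 + x ^ 2) * (π / 2)) := h2
    _ = 8 / π * (1 + x ^ 2)⁻¹ := by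
        rw [div_mul_eq_mul_div, mul_comm]
        field_simp
        ring

lemma gg_intOn : IntegrableOn (fun x : ℝ => 4 * x / (1 + x ^ 2) ^ 2) (Set.Ioi (3:ℝ)) := by
  have hb : IntegrableOn (fun x : ℝ => 2 * (1 + x ^ 2)⁻¹) (Set.Ioi (3:ℝ)) :=
    (integrable_inv_one_add_sq.const_mul _).integrableOn
  apply hb.mono' (by fun_prop : Measurable fun x : ℝ => 4 * x / (1 + x ^ 2) ^ 2).aestronglyMeasurable
  rw [ae_restrict_iff' measurableSet_Ioi]
  filter_upwards with x hx
  have hx0 : (0:ℝ) < x := lt_trans (by norm_num) hx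
  rw [Real.norm_eq_abs, abs_of_nonneg (by positivity)]
  rw [div_le_iff₀ (by positivity)]
  have h1 : (0:ℝ) < 1 + x ^ 2 := by positivity
  have h2 : (1 + x ^ 2)⁻¹ * (1 + x ^ 2) ^ 2 = 1 + x ^ 2 := by
    field_simp
  nlinarith [sq_nonneg (x - 1), sq_nonneg x]

lemma tail : (1:ℝ) / 5 ≤ ∫ x in Set.Ioi (3:ℝ), ff x := by
  have hderiv : ∀ x ∈ Set.Ici (3:ℝ),
      HasDerivAt (fun x : ℝ => -2 * (1 + x ^ 2)⁻¹) (4 * x / (1 + x ^ 2) ^ 2) x := by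
    intro x _
    have hu : HasDerivAt (fun x : ℝ => 1 + x ^ 2) (2 * x) x := by
      simpa using (hasDerivAt_pow 2 x).const_add 1
    have h2 := (hu.inv (by positivity)).const_mul (-2 : ℝ)
    convert (show HasDerivAt (fun x : ℝ => -2 * (1 + x ^ 2)⁻¹) _ x from h2) using 1
    ring
  have htend : Filter.Tendsto (fun x : ℝ => -2 * (1 + x ^ 2)⁻¹) Filter.atTop (nhds 0) := by
    have h1 : Filter.Tendsto (fun x : ℝ => 1 + x ^ 2) Filter.atTop Filter.atTop :=
      Filter.tendsto_atTop_add_const_left _ 1 (Filter.tendsto_pow_atTop (by norm_num))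
    have := (tendsto_inv_atTop_zero.comp h1).const_mul (-2 : ℝ)
    simpa using this
  have heval := MeasureTheory.integral_Ioi_of_hasDerivAt_of_tendsto' hderiv gg_intOn htend
  have hmono : ∫ x in Set.Ioi (3:ℝ), 4 * x / (1 + x ^ 2) ^ 2 ≤ ∫ x in Set.Ioi (3:ℝ), ff x :=
    MeasureTheory.setIntegral_mono_on gg_intOn
      (ff_intOn.mono_set (Set.Ioi_subset_Ioi (by norm_num)))
      measurableSet_Ioi (fun x hx => lbA (lt_trans (by norm_num) hx))
  rw [heval] at hmono
  norm_num at hmono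
  linarith

noncomputable def gr : ℕ → ℝ := fun i => i / 8

lemma psi_bound : Psi (8 / π - 1) ≤ 13634/10000 := by
  have hpiL : (3141592/1000000:ℝ) < π := by
    have := Real.pi_gt_d6; norm_num at this ⊢; linarith
  have hpiU : π < 3141593/1000000 := by
    have := Real.pi_lt_d6; norm_num at this ⊢; linarith
  have hpipos := Real.pi_pos
  set aa := 8 / π - 1 with haa
  have haL : (4858407/3141593:ℝ) ≤ aa := by
    rw [haa]
    have h8 : (8:ℝ) / (3141593/1000000) ≤ 8 / π :=
      div_le_div_of_nonneg_left (by norm_num) hpipos (le_of_lt hpiU)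
    norm_num at h8 ⊢
    linarith
  have haU : aa ≤ 4858408/3141592 := by
    rw [haa]
    have h8 : (8:ℝ) / π ≤ 8 / (3141592/1000000) :=
      div_le_div_of_nonneg_left (by norm_num) (by norm_num) (le_of_lt hpiL)
    norm_num at h8 ⊢
    linarith
  have hval : (1 + aa) / 4 = 2 / π := by
    rw [haa]; field_simp; ring
  clear_value aa
  have haa0 : (0:ℝ) ≤ aa := by linarith
  have hs2 : Real.sqrt aa ^ 2 = aa := Real.sq_sqrt haa0
  have hs0 : 0 ≤ Real.sqrt aa := Real.sqrt_nonneg _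
  have hsL : (49743/40000:ℝ) ≤ Real.sqrt aa :=
    (Real.le_sqrt (by norm_num) haa0).mpr (le_trans (by norm_num) haL)
  have hsU : Real.sqrt aa ≤ 155447/125000 := by
    calc Real.sqrt aa ≤ Real.sqrt ((155447/125000:ℝ) ^ 2) :=
          Real.sqrt_le_sqrt (le_trans haU (by norm_num))
      _ = 155447/125000 := Real.sqrt_sq (by norm_num)
  have hspos : 0 < Real.sqrt aa := lt_of_lt_of_le (by norm_num) hsL
  -- arccot bound
  have hsinv : (Real.sqrt aa)⁻¹ ≤ 40000/49743 := by
    have h1 : ((49743/40000:ℝ))⁻¹ = 40000/49743 := by norm_num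
    calc (Real.sqrt aa)⁻¹ ≤ ((49743/40000:ℝ))⁻¹ := by
          apply inv_anti₀ (by norm_num) hsL
      _ = 40000/49743 := h1
  have harctan : π / 2 - Real.arctan (Real.sqrt aa) ≤ 67744/100000 := by
    rw [← Real.arctan_inv_of_pos hspos]
    have h1 : Real.arctan (Real.sqrt aa)⁻¹ ≤ Real.arctan (40000/49743) :=
      Real.arctan_strictMono.monotone hsinv
    have h2 := arctan_le_P21 (x := (40000/49743:ℝ)) (by norm_num)
    have h3 : ((40000/49743:ℝ)) - (40000/49743:ℝ) ^ 3 / 3 + (40000/49743:ℝ) ^ 5 / 5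
        - (40000/49743:ℝ) ^ 7 / 7 + (40000/49743:ℝ) ^ 9 / 9 - (40000/49743:ℝ) ^ 11 / 11
        + (40000/49743:ℝ) ^ 13 / 13 - (40000/49743:ℝ) ^ 15 / 15 + (40000/49743:ℝ) ^ 17 / 17
        - (40000/49743:ℝ) ^ 19 / 19 + (40000/49743:ℝ) ^ 21 / 21 ≤ 67744/100000 := by
      norm_num
    linarith
  have hc0 : 0 ≤ π / 2 - Real.arctan (Real.sqrt aa) :=
    le_of_lt (sub_pos.mpr (Real.arctan_lt_pi_div_two _))
  -- log bound
  have hlog : Real.log ((1 + aa) / 4) ≤ 8 / (10580713/10000000) - 8 := by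
    have h1 : (1 + aa) / 4 = 2 / π := hval
    have h2 : Real.log (2 / π) = -Real.log (π / 2) := by
      rw [← Real.log_inv]
      congr 1
      rw [inv_div]
    -- sqrt chain
    have w1s := Real.sq_sqrt (show (0:ℝ) ≤ π/2 by positivity)
    have w1n := Real.sqrt_nonneg (π/2)
    have hq1 : (626657/500000:ℝ) ≤ Real.sqrt (π/2) :=
      (Real.le_sqrt (by norm_num) (by positivity)).mpr (by norm_num; linarith)
    have w2s := Real.sq_sqrt w1n
    have w2n := Real.sqrt_nonneg (Real.sqrt (π/2))
    have hq2 : (223903/200000:ℝ) ≤ Real.sqrt (Real.sqrt (π/2)) :=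
      (Real.le_sqrt (by norm_num) w1n).mpr (le_trans (by norm_num) hq1)
    have w3s := Real.sq_sqrt w2n
    have w3n := Real.sqrt_nonneg (Real.sqrt (Real.sqrt (π/2)))
    have hq3 : (10580713/10000000:ℝ) ≤ Real.sqrt (Real.sqrt (Real.sqrt (π/2))) :=
      (Real.le_sqrt (by norm_num) w2n).mpr (le_trans (by norm_num) hq2)
    have hq3pos : (0:ℝ) < Real.sqrt (Real.sqrt (Real.sqrt (π/2))) :=
      lt_of_lt_of_le (by norm_num) hq3
    have hexp : Real.log (π/2) = 8 * Real.log (Real.sqrt (Real.sqrt (Real.sqrt (π/2)))) := by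
      rw [Real.log_sqrt w2n, Real.log_sqrt w1n, Real.log_sqrt (by positivity : (0:ℝ) ≤ π/2)]
      ring
    have hlow : 1 - (Real.sqrt (Real.sqrt (Real.sqrt (π/2))))⁻¹
        ≤ Real.log (Real.sqrt (Real.sqrt (Real.sqrt (π/2)))) := by
      have := Real.log_le_sub_one_of_pos (inv_pos.mpr hq3pos)
      rw [Real.log_inv] at this
      linarith
    have hinv : (Real.sqrt (Real.sqrt (Real.sqrt (π/2))))⁻¹ ≤ (10580713/10000000:ℝ)⁻¹ :=
      inv_anti₀ (by norm_num) hq3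
    rw [h1, h2]
    have : Real.log (π/2) ≥ 8 * (1 - (10580713/10000000:ℝ)⁻¹) := by
      rw [hexp]
      have : 1 - (10580713/10000000:ℝ)⁻¹ ≤ Real.log (Real.sqrt (Real.sqrt (Real.sqrt (π/2)))) := by
        linarith
      linarith
    have hfin : (8:ℝ) * (1 - (10580713/10000000:ℝ)⁻¹) = 8 - 8/(10580713/10000000) := by
      norm_num
    linarith [hfin]
  -- assemble
  unfold Psi
  set s := Real.sqrt aa with hsdef
  set c := π / 2 - Real.arctan s with hcdef
  set l := Real.log ((1 + aa) / 4) with hldef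
  have h1 : (5 - aa) * c ≤ (5 - 4858407/3141593) * (67744/100000) :=
    mul_le_mul (by linarith) harctan hc0 (by norm_num)
  have h2 : s * l ≤ (49743/40000) * (8 / (10580713/10000000) - 8) := by
    calc s * l ≤ s * (8 / (10580713/10000000) - 8) := by
          exact mul_le_mul_of_nonneg_left hlog hs0
      _ ≤ (49743/40000) * (8 / (10580713/10000000) - 8) :=
          mul_le_mul_of_nonpos_right hsL (by norm_num)
  have hb : (5 - aa) * c + s * l ≤ (5 - 4858407/3141593) * (67744/100000)
      + (49743/40000) * (8 / (10580713/10000000) - 8) := by linarith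
  have hbnn : (0:ℝ) ≤ (5 - 4858407/3141593) * (67744/100000)
      + (49743/40000) * (8 / (10580713/10000000) - 8) := by norm_num
  have h3 : (1 + aa) * ((5 - aa) * c + s * l) ≤ (1 + 4858408/3141592) *
      ((5 - 4858407/3141593) * (67744/100000)
        + (49743/40000) * (8 / (10580713/10000000) - 8)) := by
    calc (1 + aa) * ((5 - aa) * c + s * l)
        ≤ (1 + aa) * ((5 - 4858407/3141593) * (67744/100000)
            + (49743/40000) * (8 / (10580713/10000000) - 8)) :=
          mul_le_mul_of_nonneg_left hb (by linarith)
      _ ≤ _ := mul_le_mul_of_nonneg_right (by linarith) hbnn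
  have hA0 : (0:ℝ) ≤ 5 - 4 * s + aa := by linarith
  have hAU : 5 - 4 * s + aa ≤ 5 - 4 * (49743/40000) + 4858408/3141592 := by linarith
  have hB0 : (0:ℝ) ≤ 2 * s + aa - 1 := by linarith
  have hBU : 2 * s + aa - 1 ≤ 2 * (155447/125000) + 4858408/3141592 - 1 := by linarith
  have hpi2 : π / 2 ≤ 3141593/2000000 := by linarith
  have h4 : π / 2 * (5 - 4 * s + aa) * (2 * s + aa - 1) ≤ (3141593/2000000) *
      (5 - 4 * (49743/40000) + 4858408/3141592) * (2 * (155447/125000) + 4858408/3141592 - 1) := by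
    apply mul_le_mul _ hBU hB0 (by norm_num)
    exact mul_le_mul hpi2 hAU hA0 (by norm_num)
  have hNum : (1 + aa) * ((5 - aa) * c + s * l) - π / 2 * (5 - 4 * s + aa) * (1 - 2 * s - aa)
      ≤ (1 + 4858408/3141592) * ((5 - 4858407/3141593) * (67744/100000)
          + (49743/40000) * (8 / (10580713/10000000) - 8))
        + (3141593/2000000) * (5 - 4 * (49743/40000) + 4858408/3141592) *
          (2 * (155447/125000) + 4858408/3141592 - 1) := by
    have hrw : (1 + aa) * ((5 - aa) * c + s * l) - π / 2 * (5 - 4 * s + aa) * (1 - 2 * s - aa)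
        = (1 + aa) * ((5 - aa) * c + s * l) + π / 2 * (5 - 4 * s + aa) * (2 * s + aa - 1) := by
      ring
    rw [hrw]
    linarith
  have hasq : (4858407/3141593 : ℝ) ^ 2 ≤ aa ^ 2 := pow_le_pow_left₀ (by norm_num) haL 2
  have hq : (25 - 6 * (4858408/3141592) + (4858407/3141593) ^ 2 : ℝ) ≤ 25 - 6 * aa + aa ^ 2 := by
    linarith
  have hfrac : (49743/40000 : ℝ) / (1 + 4858408/3141592) ≤ s / (1 + aa) :=
    div_le_div₀ hs0 hsL (by linarith) (by linarith)
  have hden : (49743/40000 : ℝ) / (1 + 4858408/3141592) *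
      (25 - 6 * (4858408/3141592) + (4858407/3141593) ^ 2) ≤ s / (1 + aa) * (25 - 6 * aa + aa ^ 2) :=
    mul_le_mul hfrac hq (by norm_num) (div_nonneg hs0 (by linarith))
  refine le_trans (div_le_div₀ (by norm_num) hNum (by norm_num) hden) ?_
  norm_num

lemma int_bound : (27902985/10000000:ℝ) ≤ ∫ s in Set.Ioi (0:ℝ), ff s := by
  have h03 : (0:ℝ) ≤ 3 := by norm_num
  have hIoc3 : IntegrableOn ff (Set.Ioc (0:ℝ) 3) :=
    ((ff_contOn le_rfl).integrableOn_Icc).mono_set Set.Ioc_subset_Icc_self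
  have hsplit : ∫ s in Set.Ioi (0:ℝ), ff s
      = (∫ s in Set.Ioc (0:ℝ) 3, ff s) + ∫ s in Set.Ioi (3:ℝ), ff s := by
    rw [← Set.Ioc_union_Ioi_eq_Ioi h03]
    exact MeasureTheory.setIntegral_union (Set.Ioc_disjoint_Ioi le_rfl) measurableSet_Ioi
      hIoc3 (ff_intOn.mono_set (Set.Ioi_subset_Ioi h03))
  have hIoc : ∫ s in Set.Ioc (0:ℝ) 3, ff s = ∫ x in (0:ℝ)..3, ff x :=
    (intervalIntegral.integral_of_le h03).symm
  have hgr : ∀ i : ℕ, gr i ≤ gr (i+1) := by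
    intro i; unfold gr; push_cast; linarith
  have hgr0 : ∀ i : ℕ, 0 ≤ gr i := by intro i; unfold gr; positivity
  have hint : ∀ k : ℕ, k < 24 → IntervalIntegrable ff volume (gr k) (gr (k+1)) := by
    intro k _
    apply ContinuousOn.intervalIntegrable
    rw [Set.uIcc_of_le (hgr k)]
    exact ff_contOn (hgr0 k)
  have hsum := intervalIntegral.sum_integral_adjacent_intervals (μ := volume) (f := ff) hint
  have hlb : ∀ i ∈ Finset.range 24,
      (1/8:ℝ) * ff (gr (i+1)) ≤ ∫ x in gr i..gr (i+1), ff x := by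
    intro i _
    have h1 : gr (i+1) - gr i = 1/8 := by unfold gr; push_cast; ring
    have h2 := piece (hgr0 i) (hgr i)
    rw [h1] at h2
    exact h2
  have hS := Finset.sum_le_sum hlb
  rw [hsum] at hS
  simp only [Finset.sum_range_succ, Finset.sum_range_zero] at hS
  norm_num [gr] at hS
  have b1 : (2506273/1000000:ℝ) ≤ ff (1/8) := le_trans (by norm_num) (lbB (x := 1/8) (by norm_num))
  have b2 : (298631/125000:ℝ) ≤ ff (1/4) := le_trans (by norm_num) (lbB (x := 1/4) (by norm_num))
  have b3 : (1104839/500000:ℝ) ≤ ff (3/8) := le_trans (by norm_num) (lbB (x := 3/8) (by norm_num))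
  have b4 : (12443/6250:ℝ) ≤ ff (1/2) := le_trans (by norm_num) (lbB (x := 1/2) (by norm_num))
  have b5 : (1755591/1000000:ℝ) ≤ ff (5/8) := le_trans (by norm_num) (lbB (x := 5/8) (by norm_num))
  have b6 : (760533/500000:ℝ) ≤ ff (3/4) := le_trans (by norm_num) (lbB (x := 3/4) (by norm_num))
  have b7 : (51853/40000:ℝ) ≤ ff (7/8) := le_trans (by norm_num) (lbB (x := 7/8) (by norm_num))
  have b8 : (270711/250000:ℝ) ≤ ff (1) := le_trans (by norm_num) (lbB (x := 1) (by norm_num))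
  have b9 : (878011/1000000:ℝ) ≤ ff (9/8) := le_trans (by norm_num) (lbB (x := 9/8) (by norm_num))
  have b10 : (761451/1000000:ℝ) ≤ ff (5/4) := le_trans (by norm_num) (lbA (x := 5/4) (by norm_num))
  have b11 : (82279/125000:ℝ) ≤ ff (11/8) := le_trans (by norm_num) (lbA (x := 11/8) (by norm_num))
  have b12 : (568047/1000000:ℝ) ≤ ff (3/2) := le_trans (by norm_num) (lbA (x := 3/2) (by norm_num))
  have b13 : (122603/250000:ℝ) ≤ ff (13/8) := le_trans (by norm_num) (lbA (x := 13/8) (by norm_num))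
  have b14 : (212071/500000:ℝ) ≤ ff (7/4) := le_trans (by norm_num) (lbA (x := 7/4) (by norm_num))
  have b15 : (367811/1000000:ℝ) ≤ ff (15/8) := le_trans (by norm_num) (lbA (x := 15/8) (by norm_num))
  have b16 : (8/25:ℝ) ≤ ff (2) := le_trans (by norm_num) (lbA (x := 2) (by norm_num))
  have b17 : (279401/1000000:ℝ) ≤ ff (17/8) := le_trans (by norm_num) (lbA (x := 17/8) (by norm_num))
  have b18 : (244871/1000000:ℝ) ≤ ff (9/4) := le_trans (by norm_num) (lbA (x := 9/4) (by norm_num))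
  have b19 : (215429/1000000:ℝ) ≤ ff (19/8) := le_trans (by norm_num) (lbA (x := 19/8) (by norm_num))
  have b20 : (190249/1000000:ℝ) ≤ ff (5/2) := le_trans (by norm_num) (lbA (x := 5/2) (by norm_num))
  have b21 : (84321/500000:ℝ) ≤ ff (21/8) := le_trans (by norm_num) (lbA (x := 21/8) (by norm_num))
  have b22 : (75017/500000:ℝ) ≤ ff (11/4) := le_trans (by norm_num) (lbA (x := 11/4) (by norm_num))
  have b23 : (133951/1000000:ℝ) ≤ ff (23/8) := le_trans (by norm_num) (lbA (x := 23/8) (by norm_num))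
  have b24 : (3/25:ℝ) ≤ ff (3) := le_trans (by norm_num) (lbA (x := 3) (by norm_num))
  have htl := tail
  linarith [hS, htl, hsplit, hIoc]

/-- The exact HD baseline-SISO sum SE integral (eq. HD_SE_SC_EXACT) is bounded
below by the closed-form bound 2Ψ(8/π − 1) of Lemma 6 / Remark 9. -/
theorem hd_exact_ge_bound :
    ∫ s in Set.Ioi (0 : ℝ),
        4 / ((1 + s ^ 2) * (s + (π / 2 - Real.arctan s))) ≥
      2 * Psi (8 / π - 1) := by
  have h1 := psi_bound
  have h2 := int_bound
  rw [ge_iff_le]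
  show 2 * Psi (8 / π - 1) ≤ ∫ s in Set.Ioi (0:ℝ), ff s
  linarith
end
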